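/- arXiv:1811.02664 — 5 statements merged into one kernel-verified Lean document; each statement's English description precedes it below -/
import Mathlib

section
/- Let n > k ≥ 1 with n - 1 > k, and let G be a k-connected graph of order n that is not complete. Then the diameter of G is at most ⌊(n+k-2)/k⌋. -/
open Finset SimpleGraph

/-- The status of a vertex: sum of distances to all other vertices. -/
noncomputable def status {V : Type*} [Fintype V] (G : SimpleGraph V) (x : V) : ℕ :=
  ∑ y, G.dist x y

/-- The Wiener index: sum of distances over unordered pairs of vertices. -/
noncomputable def wiener {V : Type*} [Fintype V] [DecidableEq V] (G : SimpleGraph V) : ℚ :=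
  (∑ p ∈ Finset.univ.offDiag, (G.dist p.1 p.2 : ℚ)) / 2

/-- Eccentricity of a vertex. -/
noncomputable def ecc {V : Type*} [Fintype V] (G : SimpleGraph V) (x : V) : ℕ :=
  Finset.univ.sup (fun y => G.dist x y)

/-- Diameter: maximum distance between pairs of vertices. -/
noncomputable def graphDiam {V : Type*} [Fintype V] (G : SimpleGraph V) : ℕ :=
  Finset.univ.sup (fun p : V × V => G.dist p.1 p.2)

/-- The set of vertices at distance exactly `i` from `x`. -/
noncomputable def sphere {V : Type*} [Fintype V] [DecidableEq V] (G : SimpleGraph V) (x : V) (i : ℕ) :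
    Finset V :=
  Finset.univ.filter (fun y => G.dist x y = i)

/-- `G` is `k`-connected: more than `k` vertices and removing any `k-1` vertices
leaves a connected graph. -/
def IsKConnected {V : Type*} [Fintype V] (G : SimpleGraph V) (k : ℕ) : Prop :=
  k < Fintype.card V ∧
    ∀ S : Finset V, S.card ≤ k - 1 → (G.induce ((↑S : Set V)ᶜ)).Connected
/-- Circular distance between two positions on a cycle of length `n`. -/
def circDist (n : ℕ) (i j : Fin n) : ℕ :=
  min ((i.val + n - j.val) % n) ((j.val + n - i.val) % n)

lemma circDist_comm (n : ℕ) (i j : Fin n) : circDist n i j = circDist n j i := by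
  unfold circDist; exact min_comm _ _

/-- The Harary graph `H_{k,n}` for `k` even: each vertex is adjacent to the
nearest `k/2` vertices in each direction around the circle. -/
def hararyEven (k n : ℕ) : SimpleGraph (Fin n) where
  Adj i j := i ≠ j ∧ circDist n i j ≤ k / 2
  symm := ⟨by
    intro i j h
    exact ⟨h.1.symm, by rw [circDist_comm]; exact h.2⟩⟩
  loopless := ⟨fun i h => h.1 rfl⟩

/-- The Harary graph `H_{k,n}` for `k` odd and `n` even: each vertex is adjacent to
the nearest `(k-1)/2` vertices in each direction and to the diametrically opposite
vertex. -/
def hararyOddEven (k n : ℕ) : SimpleGraph (Fin n) where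
  Adj i j := i ≠ j ∧ (circDist n i j ≤ (k - 1) / 2 ∨ circDist n i j = n / 2)
  symm := ⟨by
    intro i j h
    refine ⟨h.1.symm, ?_⟩
    rw [circDist_comm]; exact h.2⟩
  loopless := ⟨fun i h => h.1 rfl⟩

/-- The Harary graph `H_{k,n}` for `k` and `n` both odd: obtained from `H_{k-1,n}` by
adding an edge between vertices `a` and `a + (n-1)/2` for `0 ≤ a ≤ (n-1)/2`. -/
def hararyOddOdd (k n : ℕ) : SimpleGraph (Fin n) where
  Adj i j := i ≠ j ∧ (circDist n i j ≤ (k - 1) / 2 ∨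
    ∃ a : Fin n, a.val ≤ (n - 1) / 2 ∧
      ((i = a ∧ j.val = (a.val + (n - 1) / 2) % n) ∨
       (j = a ∧ i.val = (a.val + (n - 1) / 2) % n)))
  symm := ⟨by
    intro i j h
    refine ⟨h.1.symm, ?_⟩
    rcases h.2 with h2 | ⟨a, ha, hc⟩
    · left; rw [circDist_comm]; exact h2
    · right; exact ⟨a, ha, hc.symm⟩⟩
  loopless := ⟨fun i h => h.1 rfl⟩
lemma dist_adj_le {V : Type*} (G : SimpleGraph V) (hc : G.Connected) {x u v : V} (h : G.Adj u v) :
    G.dist x v ≤ G.dist x u + 1 := by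
  have h1 : G.dist u v ≤ 1 := by
    have := G.dist_le (SimpleGraph.Walk.cons h SimpleGraph.Walk.nil)
    simpa using this
  calc G.dist x v ≤ G.dist x u + G.dist u v := hc.dist_triangle
    _ ≤ G.dist x u + 1 := by omega

lemma walk_ivt {V : Type*} (G : SimpleGraph V) (hc : G.Connected) (x : V) (i : ℕ) :
    ∀ {a b : V} (w : G.Walk a b), G.dist x a ≤ i → i ≤ G.dist x b →
      ∃ z ∈ w.support, G.dist x z = i := by
  intro a b w
  induction w with
  | nil => intro h1 h2; exact ⟨_, by simp, le_antisymm h1 h2⟩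
  | @cons a u b h p ih =>
    intro h1 h2
    by_cases hia : G.dist x a = i
    · exact ⟨a, by simp, hia⟩
    · have h1' : G.dist x u ≤ i := by
        have := dist_adj_le G hc (x := x) h
        omega
      obtain ⟨z, hz, hzi⟩ := ih h1' h2
      exact ⟨z, by simp [hz], hzi⟩

/-- A `k`-connected non-complete graph of order `n` with `n - 1 > k ≥ 1` has
diameter at most `⌊(n+k-2)/k⌋`. -/
theorem diam_le_of_kConnected (n k : ℕ) (hk : 1 ≤ k) (hn : k < n - 1)
    (G : SimpleGraph (Fin n)) (hG : IsKConnected G k) (hne : G ≠ ⊤) :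
    graphDiam G ≤ (n + k - 2) / k := by
  have hn3 : 3 ≤ n := by omega
  have hconn : G.Connected := by
    have h0 := hG.2 ∅ (by simp)
    rw [show ((↑(∅ : Finset (Fin n)) : Set (Fin n))ᶜ) = Set.univ by simp] at h0
    exact (G.induceUnivIso).connected_iff.mp h0
  set d := graphDiam G with hd
  rcases le_or_gt d 1 with hd1 | hd2
  · rw [Nat.le_div_iff_mul_le hk]
    have : d * k ≤ k := by
      calc d * k ≤ 1 * k := Nat.mul_le_mul_right k hd1
        _ = k := one_mul k
    omega
  · -- d ≥ 2
    have hne' : (Finset.univ : Finset (Fin n × Fin n)).Nonempty := by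
      haveI : Nonempty (Fin n) := ⟨⟨0, by omega⟩⟩
      exact Finset.univ_nonempty
    obtain ⟨p, -, hp⟩ := Finset.exists_mem_eq_sup Finset.univ hne'
      (fun p : Fin n × Fin n => G.dist p.1 p.2)
    set x := p.1
    set y := p.2
    have hxy : G.dist x y = d := hp.symm
    have hdistle : ∀ z : Fin n, G.dist x z ≤ d := by
      intro z
      exact Finset.le_sup (f := fun p : Fin n × Fin n => G.dist p.1 p.2)
        (Finset.mem_univ (x, z))
    -- spheres at distance 1..d-1 have at least k vertices
    have hsph : ∀ i, 1 ≤ i → i ≤ d - 1 → k ≤ (sphere G x i).card := by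
      intro i hi1 hi2
      by_contra hlt
      push_neg at hlt
      have hcard : (sphere G x i).card ≤ k - 1 := by omega
      have hcon := hG.2 (sphere G x i) hcard
      have hx : x ∈ ((↑(sphere G x i) : Set (Fin n))ᶜ) := by
        simp only [sphere, Finset.coe_filter, Set.mem_compl_iff, Set.mem_setOf_eq,
          Finset.mem_univ, true_and, SimpleGraph.dist_self]
        omega
      have hy : y ∈ ((↑(sphere G x i) : Set (Fin n))ᶜ) := by
        simp only [sphere, Finset.coe_filter, Set.mem_compl_iff, Set.mem_setOf_eq,
          Finset.mem_univ, true_and, hxy]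
        omega
      obtain ⟨w⟩ := hcon.preconnected ⟨x, hx⟩ ⟨y, hy⟩
      set f := (SimpleGraph.Embedding.induce ((↑(sphere G x i) : Set (Fin n))ᶜ) (G := G)).toHom
      have hw := walk_ivt G hconn x i (w.map f)
        (by show G.dist x x ≤ i; have h0 := SimpleGraph.dist_self (G := G) (v := x); omega)
        (by show i ≤ G.dist x y; omega)
      obtain ⟨z, hz, hzi⟩ := hw
      rw [SimpleGraph.Walk.support_map] at hz
      obtain ⟨u, hu, huz⟩ := List.mem_map.mp hz
      have : (u : Fin n) ∉ sphere G x i := u.2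
      rw [show (u : Fin n) = z from huz] at this
      simp [sphere, hzi] at this
    -- counting
    have hdisj : ((Finset.range (d + 1) : Finset ℕ) : Set ℕ).PairwiseDisjoint
        (fun i => sphere G x i) := by
      intro i _ j _ hij
      simp only [Finset.disjoint_left]
      intro a ha hb
      simp [sphere] at ha hb
      omega
    have hsum : ∑ i ∈ Finset.range (d + 1), (sphere G x i).card ≤ n := by
      rw [← Finset.card_biUnion ?_]
      · calc ((Finset.range (d+1)).biUnion fun i => sphere G x i).card
            ≤ (Finset.univ : Finset (Fin n)).card := Finset.card_le_card (Finset.subset_univ _)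
          _ = n := by simp
      · intro i hi j hj hij
        exact hdisj (by simpa using hi) (by simpa using hj) hij
    have hc0 : 1 ≤ (sphere G x 0).card := by
      apply Finset.card_pos.mpr
      exact ⟨x, by simp [sphere]⟩
    have hcd : 1 ≤ (sphere G x d).card := by
      apply Finset.card_pos.mpr
      exact ⟨y, by simp [sphere, hxy]⟩
    have hmid : (d - 1) * k ≤ ∑ i ∈ Finset.Ico 1 d, (sphere G x i).card := by
      have := Finset.card_nsmul_le_sum (Finset.Ico 1 d)
        (fun i => (sphere G x i).card) k ?_
      · simpa [Nat.card_Ico, smul_eq_mul, mul_comm] using this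
      · intro i hi
        simp [Finset.mem_Ico] at hi
        exact hsph i hi.1 (by omega)
    have hsplit : ∑ i ∈ Finset.range (d + 1), (sphere G x i).card
        = (sphere G x 0).card + ∑ i ∈ Finset.Ico 1 d, (sphere G x i).card
          + (sphere G x d).card := by
      rw [Finset.range_eq_Ico, Finset.sum_eq_sum_Ico_succ_bot (by omega : 0 < d + 1),
        Finset.sum_Ico_succ_top (by omega : 1 ≤ d)]
      ring
    rw [Nat.le_div_iff_mul_le hk]
    have : 2 + (d - 1) * k ≤ n := by omega
    have : d * k = (d - 1) * k + k := by
      have : d - 1 + 1 = d := by omega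
      nlinarith [this]
    omega
end

section
/- Let n - 1 > k ≥ 2 with k even. In the Harary graph H_{k,n}, every vertex x satisfies |N(x,i)| = k for all 1 ≤ i ≤ ecc(x) - 1. -/
open Finset SimpleGraph

section Aux

open Fin.CommRing

lemma modsub (n a b : ℕ) (ha : a < n) (hb : b ≤ n) :
    (a + n - b) % n = if b ≤ a then a - b else a + n - b := by
  split
  · next h =>
    have h2 : a + n - b = n + (a - b) := by omega
    rw [h2, Nat.add_mod_left, Nat.mod_eq_of_lt (by omega)]
  · next h => exact Nat.mod_eq_of_lt (by omega)

lemma finsub_val (n : ℕ) (a b : Fin n) : (a - b).val = (a.val + n - b.val) % n := by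
  rw [Fin.sub_def]
  show (n - b.val + a.val) % n = _
  congr 1
  have := b.isLt
  omega

lemma circDist_eq (n : ℕ) (x y : Fin n) :
    circDist n x y = min ((y - x).val) (n - (y - x).val) := by
  have hx := x.isLt; have hy := y.isLt
  unfold circDist
  rw [finsub_val, modsub n x.val y.val hx (le_of_lt hy),
    modsub n y.val x.val hy (le_of_lt hx)]
  split_ifs <;> omega

lemma circDist_triangle (n : ℕ) [NeZero n] (x y z : Fin n) :
    circDist n x z ≤ circDist n x y + circDist n y z := by
  have hn : 0 < n := Nat.pos_of_neZero n
  rw [circDist_eq, circDist_eq, circDist_eq]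
  have h1 : z - x = (y - x) + (z - y) := by ring
  have h2 : (z - x).val = ((y - x).val + (z - y).val) % n := by
    rw [h1, Fin.add_def]
  have ha := (y - x).isLt; have hb := (z - y).isLt
  rcases Nat.lt_or_ge ((y - x).val + (z - y).val) n with h | h
  · rw [Nat.mod_eq_of_lt h] at h2
    omega
  · have h3 : (y - x).val + (z - y).val - n < n := by omega
    have h4 : ((y - x).val + (z - y).val) % n = (y - x).val + (z - y).val - n := by
      conv_lhs => rw [show (y - x).val + (z - y).val
        = ((y - x).val + (z - y).val - n) + n by omega]
      rw [Nat.add_mod_right, Nat.mod_eq_of_lt h3]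
    rw [h4] at h2
    omega

lemma circDist_self (n : ℕ) [NeZero n] (x : Fin n) : circDist n x x = 0 := by
  rw [circDist_eq, sub_self]
  simp

variable {k n : ℕ}

lemma harary_walk_bound [NeZero n] (hk : 2 ≤ k) (x y : Fin n)
    (W : (hararyEven k n).Walk x y) : circDist n x y ≤ k / 2 * W.length := by
  induction W with
  | nil => simp [circDist_self]
  | @cons u v w hadj p ih =>
    calc circDist n u w ≤ circDist n u v + circDist n v w := circDist_triangle n u v w
    _ ≤ k / 2 + k / 2 * p.length := Nat.add_le_add (hadj : u ≠ v ∧ circDist n u v ≤ k / 2).2 ih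
    _ = k / 2 * (SimpleGraph.Walk.cons hadj p).length := by
      rw [SimpleGraph.Walk.length_cons]; ring

lemma harary_exists_walk [NeZero n] (hk : 2 ≤ k) (hn : k < n - 1) :
    ∀ c (x y : Fin n), circDist n x y = c →
      ∃ W : (hararyEven k n).Walk x y, W.length = (c + k / 2 - 1) / (k / 2) := by
  have hr : 1 ≤ k / 2 := by omega
  have hn2 : 2 * (k / 2) + 2 ≤ n := by omega
  intro c
  induction c using Nat.strong_induction_on with
  | _ c ih =>
    intro x y hc
    set r := k / 2 with hrdef
    have hd := circDist_eq n x y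
    set d := (y - x).val with hddef
    have hdlt : d < n := (y - x).isLt
    rcases Nat.eq_zero_or_pos c with rfl | hcpos
    · have hd0 : d = 0 := by omega
      have hyx : y = x := by
        refine sub_eq_zero.mp (Fin.val_injective ?_)
        rw [Fin.val_zero, ← hddef]
        exact hd0
      subst hyx
      refine ⟨SimpleGraph.Walk.nil, ?_⟩
      rw [SimpleGraph.Walk.length_nil, show 0 + r - 1 = r - 1 from by omega]
      exact (Nat.div_eq_of_lt (by omega)).symm
    rcases le_or_gt c r with hcr | hcr
    · -- adjacent
      have hne : x ≠ y := by
        intro h; subst h; rw [circDist_self] at hc; omega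
      have hadj : (hararyEven k n).Adj x y := ⟨hne, by rw [hc]; exact hcr⟩
      refine ⟨SimpleGraph.Walk.cons hadj SimpleGraph.Walk.nil, ?_⟩
      simp only [SimpleGraph.Walk.length_cons, SimpleGraph.Walk.length_nil]
      have h5 : c + r - 1 = (c - 1) + 1 * r := by omega
      rw [h5, Nat.add_mul_div_right _ _ (by omega : 0 < r), Nat.div_eq_of_lt (by omega)]
    · -- step
      have hrn : r < n := by omega
      have hrval : ((r : Fin n)).val = r := Fin.val_cast_of_lt hrn
      rcases le_or_gt d (n - d) with hdir | hdir
      · -- c = d, step x' = x + r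
        have hcd : c = d := by omega
        set x' : Fin n := x + (r : Fin n) with hx'
        have hsub : (y - x').val = d - r := by
          have h6 : y - x' = (y - x) - (r : Fin n) := by rw [hx']; ring
          rw [h6, finsub_val]
          rw [← hddef, hrval]
          have h7 : d + n - r = (d - r) + n := by omega
          rw [h7, Nat.add_mod_right, Nat.mod_eq_of_lt (by omega)]
        have hcd' : circDist n x' y = c - r := by
          rw [circDist_eq, hsub]; omega
        have hadjsub : (x' - x).val = r := by
          have h8 : x' - x = (r : Fin n) := by rw [hx']; ring
          rw [h8, hrval]
        have hadj : (hararyEven k n).Adj x x' := by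
          refine ⟨?_, ?_⟩
          · intro h
            rw [h, sub_self] at hadjsub
            simp at hadjsub
            omega
          · rw [circDist_eq, hadjsub]; omega
        obtain ⟨W, hW⟩ := ih (c - r) (by omega) x' y hcd'
        refine ⟨SimpleGraph.Walk.cons hadj W, ?_⟩
        rw [SimpleGraph.Walk.length_cons, hW]
        have e1 : c - r + r - 1 = c - 1 := by omega
        have e2 : c + r - 1 = (c - 1) + 1 * r := by omega
        rw [e1, e2, Nat.add_mul_div_right _ _ (by omega : 0 < r)]
      · -- c = n - d, step x' = x - r
        have hcd : c = n - d := by omega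
        set x' : Fin n := x - (r : Fin n) with hx'
        have hsub : (y - x').val = d + r := by
          have h6 : y - x' = (y - x) + (r : Fin n) := by rw [hx']; ring
          rw [h6, Fin.add_def]
          show ((y - x).val + ((r : Fin n)).val) % n = _
          rw [← hddef, hrval]
          exact Nat.mod_eq_of_lt (by omega)
        have hcd' : circDist n x' y = c - r := by
          rw [circDist_eq, hsub]; omega
        have hadjsub : (x' - x).val = n - r := by
          have h8 : x' - x = (0 : Fin n) - (r : Fin n) := by rw [hx']; ring
          rw [h8, finsub_val]
          rw [Fin.val_zero, hrval]
          rw [Nat.zero_add]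
          exact Nat.mod_eq_of_lt (by omega)
        have hadj : (hararyEven k n).Adj x x' := by
          refine ⟨?_, ?_⟩
          · intro h
            rw [h, sub_self] at hadjsub
            simp at hadjsub
            omega
          · rw [circDist_eq, hadjsub]; omega
        obtain ⟨W, hW⟩ := ih (c - r) (by omega) x' y hcd'
        refine ⟨SimpleGraph.Walk.cons hadj W, ?_⟩
        rw [SimpleGraph.Walk.length_cons, hW]
        have e1 : c - r + r - 1 = c - 1 := by omega
        have e2 : c + r - 1 = (c - 1) + 1 * r := by omega
        rw [e1, e2, Nat.add_mul_div_right _ _ (by omega : 0 < r)]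

lemma harary_dist_eq [NeZero n] (hk : 2 ≤ k) (hn : k < n - 1) (x y : Fin n) :
    (hararyEven k n).dist x y = (circDist n x y + k / 2 - 1) / (k / 2) := by
  have hr : 1 ≤ k / 2 := by omega
  obtain ⟨W, hW⟩ := harary_exists_walk hk hn (circDist n x y) x y rfl
  refine le_antisymm (hW ▸ SimpleGraph.dist_le W) ?_
  have hreach : (hararyEven k n).Reachable x y := ⟨W⟩
  obtain ⟨P, hP⟩ := hreach.exists_walk_length_eq_dist
  have hb := harary_walk_bound hk x y P
  rw [hP] at hb
  rw [Nat.div_le_iff_le_mul_add_pred (by omega : 0 < k / 2)]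
  omega

lemma circDist_le_half (n : ℕ) (x y : Fin n) : circDist n x y ≤ n / 2 := by
  rcases Nat.eq_zero_or_pos n with rfl | hn
  · exact absurd x.isLt (by omega)
  rw [circDist_eq]
  have := (y - x).isLt
  omega

end Aux

/-- For `k` even, `n - 1 > k ≥ 2`, every vertex `x` of the Harary graph `H_{k,n}`
satisfies `|N(x,i)| = k` for all `1 ≤ i ≤ ecc(x) - 1`. -/
theorem hararyEven_sphere_card (k n : ℕ) (hk : 2 ≤ k) (hke : Even k) (hn : k < n - 1)
    (x : Fin n) (i : ℕ) (hi1 : 1 ≤ i) (hi2 : i ≤ ecc (hararyEven k n) x - 1) :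
    (sphere (hararyEven k n) x i).card = k := by
  haveI : NeZero n := ⟨by omega⟩
  have hr : 1 ≤ k / 2 := by omega
  set r := k / 2 with hrdef
  have hk2 : k = 2 * r := by
    obtain ⟨m, hm⟩ := hke; omega
  obtain ⟨j, rfl⟩ : ∃ j, i = j + 1 := ⟨i - 1, by omega⟩
  have hjr : (j + 1) * r = j * r + r := by ring
  have hjr2 : (j + 2) * r = j * r + r + r := by ring
  -- eccentricity upper bound gives (j+1)*r < n/2
  have hecc : ecc (hararyEven k n) x ≤ (n / 2 + r - 1) / r := by
    unfold ecc
    refine Finset.sup_le fun y _ => ?_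
    rw [harary_dist_eq hk hn]
    exact Nat.div_le_div_right (by have := circDist_le_half n x y; omega)
  have hie : j + 2 ≤ (n / 2 + r - 1) / r := by omega
  have hb : (j + 2) * r ≤ n / 2 + r - 1 := (Nat.le_div_iff_mul_le (by omega)).mp hie
  have hbM : j * r + r < n / 2 := by omega
  have h2b : 2 * (j * r + r) < n := by omega
  -- characterize membership in the sphere
  have hchar : ∀ c : ℕ, ((c + r - 1) / r = j + 1 ↔ (j * r < c ∧ c ≤ j * r + r)) := by
    intro c
    constructor
    · intro h
      have h1 : (j + 1) * r ≤ c + r - 1 := (Nat.le_div_iff_mul_le (by omega)).mp (le_of_eq h.symm)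
      have h2 : c + r - 1 < (j + 2) * r :=
        (Nat.div_lt_iff_lt_mul (show 0 < r by omega)).mp (by omega)
      omega
    · intro ⟨h1, h2⟩
      have h3 : (j + 1) * r ≤ c + r - 1 := by omega
      have h4 : c + r - 1 < (j + 1 + 1) * r := by
        have : (j + 1 + 1) * r = j * r + r + r := by ring
        omega
      exact Nat.div_eq_of_lt_le h3 h4
  have hsph : sphere (hararyEven k n) x (j + 1) =
      Finset.univ.filter
        (fun y => j * r < circDist n x y ∧ circDist n x y ≤ j * r + r) := by
    ext y
    simp only [sphere, Finset.mem_filter, Finset.mem_univ, true_and]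
    rw [harary_dist_eq hk hn, hchar]
  rw [hsph]
  have hcard : (Finset.univ.filter
      (fun y : Fin n => j * r < circDist n x y ∧ circDist n x y ≤ j * r + r)).card
      = ((Finset.range n).filter
        (fun m => j * r < min m (n - m) ∧ min m (n - m) ≤ j * r + r)).card := by
    apply Finset.card_bij (fun y _ => (y - x).val)
    · intro y hy
      simp only [Finset.mem_filter, Finset.mem_range]
      simp only [Finset.mem_filter, Finset.mem_univ, true_and] at hy
      rw [circDist_eq] at hy
      exact ⟨(y - x).isLt, hy⟩
    · intro y1 _ y2 _ h
      have h2 : y1 - x = y2 - x := Fin.val_injective h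
      exact sub_left_inj.mp h2
    · intro m hm
      letI : CommRing (Fin n) := Fin.instCommRing n
      simp only [Finset.mem_filter, Finset.mem_range] at hm
      have he : (x + (m : Fin n)) - x = (m : Fin n) := by ring
      refine ⟨x + (m : Fin n), ?_, ?_⟩
      · simp only [Finset.mem_filter, Finset.mem_univ, true_and]
        rw [circDist_eq, he, Fin.val_cast_of_lt hm.1]
        exact hm.2
      · rw [he, Fin.val_cast_of_lt hm.1]
  rw [hcard]
  have hset : (Finset.range n).filter
      (fun m => j * r < min m (n - m) ∧ min m (n - m) ≤ j * r + r)
      = Finset.Ioc (j * r) (j * r + r) ∪ Finset.Ico (n - (j * r + r)) (n - j * r) := by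
    ext m
    simp only [Finset.mem_filter, Finset.mem_range, Finset.mem_union, Finset.mem_Ioc,
      Finset.mem_Ico]
    omega
  rw [hset, Finset.card_union_of_disjoint, Nat.card_Ioc, Nat.card_Ico]
  · omega
  · rw [Finset.disjoint_left]
    intro m hm1 hm2
    simp only [Finset.mem_Ioc] at hm1
    simp only [Finset.mem_Ico] at hm2
    omega
end

section
/- Let n - 1 > k ≥ 2 with k even, and let D = ⌊(n+k-2)/k⌋. Then the Wiener index of the Harary graph H_{k,n} equals (1/4)·n·D·(2n+k-2-kD). -/
open Finset SimpleGraph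

lemma mod_helper {n : ℕ} (a b : ℕ) (ha : a < n) (hb : b < n) :
    (a + n - b) % n = if b ≤ a then a - b else a + n - b := by
  split_ifs with h
  · have h2 : a + n - b = (a - b) + n := by omega
    rw [h2, Nat.add_mod_right, Nat.mod_eq_of_lt (by omega)]
  · exact Nat.mod_eq_of_lt (by omega)

lemma mod_helper2 {n : ℕ} (a : ℕ) (h : a < 2 * n) :
    a % n = if a < n then a else a - n := by
  split_ifs with h1
  · exact Nat.mod_eq_of_lt h1
  · have h2 : a = (a - n) + n := by omega
    rw [h2, Nat.add_mod_right, Nat.mod_eq_of_lt (by omega)]; omega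

lemma cd_min {n : ℕ} (i j : Fin n) :
    circDist n i j = min (i.val - j.val + (j.val - i.val)) (n - (i.val - j.val + (j.val - i.val))) := by
  have hi := i.isLt; have hj := j.isLt
  unfold circDist
  rw [mod_helper _ _ hi hj, mod_helper _ _ hj hi]
  split_ifs <;> omega

lemma cd_triangle {n : ℕ} (i j l : Fin n) :
    circDist n i l ≤ circDist n i j + circDist n j l := by
  have hi := i.isLt; have hj := j.isLt; have hl := l.isLt
  rw [cd_min, cd_min, cd_min]; omega

lemma cd_eq_zero {n : ℕ} {i j : Fin n} (h : circDist n i j = 0) : i = j := by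
  have hi := i.isLt; have hj := j.isLt
  rw [cd_min] at h
  exact Fin.ext (by omega)

lemma cd_self {n : ℕ} (i : Fin n) : circDist n i i = 0 := by
  have hi := i.isLt; rw [cd_min]; omega

lemma cd_shift {N : ℕ} (t a b : Fin (N + 1)) :
    circDist (N + 1) (a + t) (b + t) = circDist (N + 1) a b := by
  have ha := a.isLt; have hb := b.isLt; have ht := t.isLt
  rw [cd_min, cd_min, Fin.add_def, Fin.add_def]
  simp only []
  rw [mod_helper2 _ (by omega), mod_helper2 _ (by omega)]
  split_ifs <;> omega

lemma step_aux {k n m : ℕ} (hk : k = 2 * m) {i j : Fin n} (X : ℕ) (hX : X < n)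
    (h1 : X ≠ i.val)
    (h2 : min (i.val - X + (X - i.val)) (n - (i.val - X + (X - i.val))) ≤ m)
    (h3 : min (X - j.val + (j.val - X)) (n - (X - j.val + (j.val - X))) = circDist n i j - m) :
    ∃ w : Fin n, (hararyEven k n).Adj i w ∧ circDist n w j = circDist n i j - m := by
  refine ⟨⟨X, hX⟩, ⟨?_, ?_⟩, ?_⟩
  · intro hEq; exact h1 (congrArg Fin.val hEq).symm
  · rw [cd_min]
    show min (i.val - X + (X - i.val)) (n - (i.val - X + (X - i.val))) ≤ k / 2
    omega
  · rw [cd_min]; exact h3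

lemma harary_step {k n m : ℕ} (hm : 1 ≤ m) (hk : k = 2 * m) (hn : 2 * m + 2 ≤ n)
    (i j : Fin n) (h : m < circDist n i j) :
    ∃ w : Fin n, (hararyEven k n).Adj i w ∧ circDist n w j = circDist n i j - m := by
  have hi := i.isLt; have hj := j.isLt
  have hc := cd_min i j
  rcases le_or_gt i.val j.val with hab | hab
  · by_cases hside : j.val - i.val ≤ n - (j.val - i.val)
    · exact step_aux hk (i.val + m) (by omega) (by omega) (by omega) (by omega)
    · by_cases hma : m ≤ i.val
      · exact step_aux hk (i.val - m) (by omega) (by omega) (by omega) (by omega)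
      · exact step_aux hk (i.val + n - m) (by omega) (by omega) (by omega) (by omega)
  · by_cases hside : i.val - j.val ≤ n - (i.val - j.val)
    · exact step_aux hk (i.val - m) (by omega) (by omega) (by omega) (by omega)
    · by_cases hma : i.val + m < n
      · exact step_aux hk (i.val + m) (by omega) (by omega) (by omega) (by omega)
      · exact step_aux hk (i.val + m - n) (by omega) (by omega) (by omega) (by omega)

lemma harary_reach {k n m : ℕ} (hm : 1 ≤ m) (hk : k = 2 * m) (hn : 2 * m + 2 ≤ n) :
    ∀ (c : ℕ) (i j : Fin n), circDist n i j ≤ c * m →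
      ∃ p : (hararyEven k n).Walk i j, p.length ≤ c := by
  intro c
  induction c with
  | zero =>
    intro i j h
    have : i = j := cd_eq_zero (by omega)
    subst this
    exact ⟨SimpleGraph.Walk.nil, by simp⟩
  | succ c ih =>
    intro i j h
    by_cases hij : i = j
    · subst hij; exact ⟨SimpleGraph.Walk.nil, by simp⟩
    · by_cases hm2 : circDist n i j ≤ m
      · refine ⟨SimpleGraph.Walk.cons (show (hararyEven k n).Adj i j from ⟨hij, by omega⟩) SimpleGraph.Walk.nil, by simp⟩
      · obtain ⟨w, hadj, hw⟩ := harary_step hm hk hn i j (by omega)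
        have hcc : (c + 1) * m = c * m + m := by ring
        obtain ⟨p, hp⟩ := ih w j (by omega)
        exact ⟨SimpleGraph.Walk.cons hadj p, by simp [SimpleGraph.Walk.length_cons]; omega⟩

lemma harary_walk_lb {k n m : ℕ} (hk : k = 2 * m) :
    ∀ {i j : Fin n} (p : (hararyEven k n).Walk i j), circDist n i j ≤ m * p.length := by
  intro i j p
  induction p with
  | nil => simp [cd_self]
  | @cons u v w hadj p ih =>
    have h1 := cd_triangle u v w
    have h2 : circDist n u v ≤ m := by have := hadj.2; omega
    simp only [SimpleGraph.Walk.length_cons]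
    have : m * (p.length + 1) = m * p.length + m := by ring
    omega

lemma harary_dist {k n m : ℕ} (hm : 1 ≤ m) (hk : k = 2 * m) (hn : 2 * m + 2 ≤ n)
    (i j : Fin n) :
    (hararyEven k n).dist i j = (circDist n i j + m - 1) / m := by
  set c := circDist n i j with hc
  have hdm := Nat.div_add_mod (c + m - 1) m
  have hmod := Nat.mod_lt (c + m - 1) (show 0 < m by omega)
  set q := (c + m - 1) / m with hq
  have hcq : c ≤ q * m := by
    set r := (c + m - 1) % m
    have : m * q = q * m := by ring
    omega
  obtain ⟨p, hp⟩ := harary_reach hm hk hn q i j hcq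
  apply le_antisymm
  · exact le_trans (SimpleGraph.dist_le p) hp
  · obtain ⟨w, hw⟩ := SimpleGraph.Reachable.exists_walk_length_eq_dist ⟨p⟩
    have hlb := harary_walk_lb hk w
    rw [hw] at hlb
    set d := (hararyEven k n).dist i j
    set r := (c + m - 1) % m
    have : m * q = q * m := by ring
    -- q ≤ d from c ≤ m * d and q*m ≤ c + m - 1 i.e. q*m < c + m
    have h2 : q * m ≤ c + m - 1 := by omega
    by_contra hqd
    push_neg at hqd
    -- d < q, so d + 1 ≤ q, m*(d+1) ≤ m*q = q*m ≤ c + m - 1, so m*d ≤ c - 1 < c ≤ m*d contradiction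
    have h3 : m * (d + 1) ≤ m * q := Nat.mul_le_mul_left m hqd
    have h4 : m * (d + 1) = m * d + m := by ring
    omega

lemma ceil_card (m c D : ℕ) (hm : 0 < m) (hc : c ≤ m * D) :
    (c + m - 1) / m = ((Finset.range D).filter (fun t => m * t < c)).card := by
  have hq : (c + m - 1) / m ≤ D := by
    rw [Nat.div_le_iff_le_mul_add_pred hm]
    have : m * D = D * m := by ring
    omega
  have : (Finset.range D).filter (fun t => m * t < c) = Finset.range ((c + m - 1) / m) := by
    ext t
    simp only [Finset.mem_filter, Finset.mem_range]
    constructor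
    · rintro ⟨htD, hmt⟩
      have : t + 1 ≤ (c + m - 1) / m := by
        rw [Nat.le_div_iff_mul_le hm]
        have : (t + 1) * m = m * t + m := by ring
        omega
      omega
    · intro ht
      have h1 : t + 1 ≤ (c + m - 1) / m := ht
      rw [Nat.le_div_iff_mul_le hm] at h1
      have h2 : (t + 1) * m = m * t + m := by ring
      exact ⟨by omega, by omega⟩
  rw [this, Finset.card_range]

lemma count_far (n s : ℕ) :
    ((Finset.range n).filter (fun v => s < min v (n - v))).card = n - 1 - 2 * s := by
  have : (Finset.range n).filter (fun v => s < min v (n - v)) = Finset.Ico (s + 1) (n - s) := by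
    ext v
    simp only [Finset.mem_filter, Finset.mem_range, Finset.mem_Ico]
    omega
  rw [this, Nat.card_Ico]
  omega

lemma sum_eval (n m D : ℕ) (hm : 0 < m) (h1 : n ≤ 2 * m * D + 1) :
    ∑ v ∈ Finset.range n, (min v (n - v) + m - 1) / m
      = ∑ t ∈ Finset.range D, (n - 1 - 2 * m * t) := by
  have key : ∀ v ∈ Finset.range n, (min v (n - v) + m - 1) / m
      = ((Finset.range D).filter (fun t => m * t < min v (n - v))).card := by
    intro v hv
    apply ceil_card _ _ _ hm
    have h2 : 2 * min v (n - v) ≤ n := by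
      simp at hv; omega
    have : 2 * (m * D) = 2 * m * D := by ring
    omega
  rw [Finset.sum_congr rfl key]
  simp only [Finset.card_filter]
  rw [Finset.sum_comm]
  apply Finset.sum_congr rfl
  intro t ht
  rw [← Finset.card_filter, count_far n (m * t)]
  ring_nf

lemma sum_cast (n m D : ℕ) (hn : 2 ≤ n) (h2 : 2 * m * D ≤ n + 2 * m - 2) :
    ((∑ t ∈ Finset.range D, (n - 1 - 2 * m * t) : ℕ) : ℚ)
      = (D : ℚ) * ((n : ℚ) - 1) - (m : ℚ) * (D : ℚ) * ((D : ℚ) - 1) := by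
  have hterm : ∀ t ∈ Finset.range D, 2 * m * t ≤ n - 1 := by
    intro t ht
    simp only [Finset.mem_range] at ht
    have h3 : 2 * m * t + 2 * m ≤ 2 * m * (t + 1) := by ring_nf; omega
    have h4 : 2 * m * (t + 1) ≤ 2 * m * D := Nat.mul_le_mul_left _ (by omega)
    omega
  rw [Nat.cast_sum]
  rw [Finset.sum_congr rfl (fun t ht => by
    have h5 := hterm t ht
    have : ((n - 1 - 2 * m * t : ℕ) : ℚ) = (n : ℚ) - 1 - 2 * (m : ℚ) * (t : ℚ) := by
      have e1 : (((n - 1) - 2 * m * t : ℕ) : ℚ) = ((n - 1 : ℕ) : ℚ) - ((2 * m * t : ℕ) : ℚ) :=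
        Nat.cast_sub h5
      rw [e1, Nat.cast_sub (by omega : 1 ≤ n)]
      push_cast
      ring
    exact this)]
  rw [Finset.sum_sub_distrib, Finset.sum_const, Finset.card_range]
  have gauss : (∑ t ∈ Finset.range D, (t : ℚ)) * 2 = (D : ℚ) * ((D : ℚ) - 1) := by
    have := Finset.sum_range_id_mul_two D
    have hcast : (((∑ t ∈ Finset.range D, t) * 2 : ℕ) : ℚ) = ((D * (D - 1) : ℕ) : ℚ) := by
      exact_mod_cast congrArg (Nat.cast (R := ℚ)) this
    push_cast at hcast
    rcases Nat.eq_zero_or_pos D with hD | hD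
    · subst hD; simp
    · rw [Nat.cast_sub hD] at hcast
      push_cast at hcast
      linarith [hcast]
  have hs : ∑ t ∈ Finset.range D, 2 * (m : ℚ) * (t : ℚ)
      = 2 * (m : ℚ) * (∑ t ∈ Finset.range D, (t : ℚ)) := by
    rw [← Finset.mul_sum]
  rw [hs]
  have : (∑ t ∈ Finset.range D, (t : ℚ)) = (D : ℚ) * ((D : ℚ) - 1) / 2 := by
    linarith [gauss]
  rw [this]
  simp only [nsmul_eq_mul]
  ring

/-- For `k` even, `n - 1 > k ≥ 2`, with `D = ⌊(n+k-2)/k⌋`, the Wiener index of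
`H_{k,n}` equals `(1/4)·n·D·(2n+k-2-kD)`. -/
theorem hararyEven_wiener (k n : ℕ) (hk : 2 ≤ k) (hke : Even k) (hn : k < n - 1) :
    wiener (hararyEven k n) = (1 / 4 : ℚ) * (n : ℚ) * ((n + k - 2) / k : ℕ) *
      (2 * (n : ℚ) + (k : ℚ) - 2 - (k : ℚ) * ((n + k - 2) / k : ℕ)) := by
  obtain ⟨m, hkm⟩ : ∃ m, k = 2 * m := by
    obtain ⟨m, hm⟩ := hke; exact ⟨m, by omega⟩
  subst hkm
  have hm1 : 1 ≤ m := by omega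
  have hn2 : 2 * m + 2 ≤ n := by omega
  obtain ⟨N, rfl⟩ : ∃ N, n = N + 1 := ⟨n - 1, by omega⟩
  set n := N + 1 with hnn
  set G := hararyEven (2 * m) n with hG
  set D := (n + 2 * m - 2) / (2 * m) with hD
  have hdm : 2 * m * D + (n + 2 * m - 2) % (2 * m) = n + 2 * m - 2 := by
    rw [hD]; exact Nat.div_add_mod _ _
  have hmod : (n + 2 * m - 2) % (2 * m) < 2 * m :=
    Nat.mod_lt _ (by omega)
  have hD2 : 2 * m * D ≤ n + 2 * m - 2 := by omega
  have hD1 : n ≤ 2 * m * D + 1 := by omega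
  have hdist : ∀ i j : Fin n, G.dist i j = (circDist n i j + m - 1) / m :=
    harary_dist hm1 rfl hn2
  set S0 : ℕ := ∑ j : Fin n, G.dist 0 j with hS0
  -- each row equals the row of 0
  have hrow : ∀ i : Fin n, (∑ j : Fin n, G.dist i j) = S0 := by
    intro i
    rw [hS0]
    have e1 : (∑ j : Fin n, G.dist i j)
        = ∑ j : Fin n, G.dist i ((Equiv.addRight i) j) :=
      (Equiv.sum_comp (Equiv.addRight i) (fun j => G.dist i j)).symm
    rw [e1]
    apply Finset.sum_congr rfl
    intro j _
    rw [hdist, hdist]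
    have h0 : circDist n (0 + i) (j + i) = circDist n 0 j := cd_shift i 0 j
    rw [zero_add] at h0
    have h1 : circDist n i ((Equiv.addRight i) j) = circDist n 0 j := h0
    rw [h1]
  -- the natural-number total
  have hWn : (∑ p ∈ (Finset.univ : Finset (Fin n)).offDiag, G.dist p.1 p.2)
      = n * S0 := by
    have hfull : (∑ p ∈ (Finset.univ : Finset (Fin n)).offDiag, G.dist p.1 p.2)
        = ∑ p : Fin n × Fin n, G.dist p.1 p.2 := by
      apply Finset.sum_subset (Finset.subset_univ _)
      intro p _ hp
      have hpe : p.1 = p.2 := by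
        by_contra hne
        exact hp (Finset.mem_offDiag.mpr ⟨Finset.mem_univ _, Finset.mem_univ _, hne⟩)
      rw [hpe, SimpleGraph.dist_self]
    rw [hfull, Fintype.sum_prod_type]
    rw [Finset.sum_congr rfl (fun i _ => hrow i), Finset.sum_const,
      Finset.card_univ, Fintype.card_fin, smul_eq_mul]
  -- evaluate S0
  have hterm : ∀ j : Fin n, G.dist 0 j = (min j.val (n - j.val) + m - 1) / m := by
    intro j
    rw [hdist]
    have hcd : circDist n 0 j = min j.val (n - j.val) := by
      have hj := j.isLt
      rw [cd_min]
      have h0 : (0 : Fin n).val = 0 := rfl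
      rw [h0]
      omega
    rw [hcd]
  have hS0r : S0 = ∑ v ∈ Finset.range n, (min v (n - v) + m - 1) / m := by
    rw [hS0]
    rw [Finset.sum_congr rfl (fun j _ => hterm j)]
    exact Fin.sum_univ_eq_sum_range (fun v => (min v (n - v) + m - 1) / m) n
  have hSsum : S0 = ∑ t ∈ Finset.range D, (n - 1 - 2 * m * t) := by
    rw [hS0r]; exact sum_eval n m D (by omega) hD1
  have hSQ : (S0 : ℚ) = (D : ℚ) * ((n : ℚ) - 1) - (m : ℚ) * (D : ℚ) * ((D : ℚ) - 1) := by
    rw [hSsum]; exact sum_cast n m D (by omega) hD2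
  have hcast : wiener G = ((n * S0 : ℕ) : ℚ) / 2 := by
    rw [wiener, ← hWn, Nat.cast_sum]
  rw [hcast]
  push_cast [hSQ]
  ring
end

section
/- Let k ≥ 3 be odd and n ≥ 3k + 1 be even, and let D = ⌊(n-k-3)/(2(k-1))⌋ + 2. Then the Harary graph H_{k,n} has diameter D and Wiener index W(H_{k,n}) = (1/4)·n·D·(2n+4k-8-2(k-1)D) - (1/2)·n·(k-2). -/
open Finset SimpleGraph

def cdiv (a m : ℕ) : ℕ := (a + m - 1) / m
def dlt (m h d : ℕ) : ℕ := min (cdiv d m) (1 + cdiv (h - d) m)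
lemma mod_two (n a : ℕ) (h : a < 2 * n) : a % n = if a < n then a else a - n := by
  split
  · exact Nat.mod_eq_of_lt ‹_›
  · rw [Nat.mod_eq_sub_mod (by omega), Nat.mod_eq_of_lt (by omega)]
lemma cdiv_le_iff {m : ℕ} (hm : 0 < m) (a j : ℕ) : cdiv a m ≤ j ↔ a ≤ m * j := by
  unfold cdiv
  rw [Nat.div_le_iff_le_mul_add_pred hm]
  omega
lemma le_cdiv_iff {m : ℕ} (hm : 0 < m) (a j : ℕ) (hj : 0 < j) :
    j ≤ cdiv a m ↔ m * (j - 1) + 1 ≤ a := by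
  obtain ⟨j', rfl⟩ : ∃ j', j = j' + 1 := ⟨j - 1, by omega⟩
  unfold cdiv
  rw [Nat.le_div_iff_mul_le hm, add_mul, one_mul, mul_comm]
  simp only [Nat.add_sub_cancel]
  omega
lemma cdiv_zero (m : ℕ) (hm : 0 < m) : cdiv 0 m = 0 := by
  unfold cdiv; exact Nat.div_eq_of_lt (by omega)
lemma cdiv_mono {m : ℕ} {a b : ℕ} (hab : a ≤ b) : cdiv a m ≤ cdiv b m :=
  Nat.div_le_div_right (by omega)
lemma cdiv_add_m {m : ℕ} (hm : 0 < m) (a : ℕ) : cdiv (a + m) m = cdiv a m + 1 := by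
  unfold cdiv
  rw [show a + m + m - 1 = (a + m - 1) + m by omega, Nat.add_div_right _ hm]
lemma cdiv_le_succ {m : ℕ} (hm : 0 < m) {a b : ℕ} (hab : a ≤ b + m) :
    cdiv a m ≤ cdiv b m + 1 := by
  calc cdiv a m ≤ cdiv (b + m) m := cdiv_mono hab
  _ = cdiv b m + 1 := cdiv_add_m hm b
lemma circ_rep {n : ℕ} (hn : 0 < n) (x y : Fin n) :
    circDist n x y = min ((y.val + n - x.val) % n) (n - (y.val + n - x.val) % n) := by
  obtain ⟨a, ha⟩ := x; obtain ⟨b, hb⟩ := y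
  unfold circDist
  simp only
  rw [mod_two n (a + n - b) (by omega), mod_two n (b + n - a) (by omega)]
  split_ifs <;> omega
lemma M1 {n a b : ℕ} (ha : a < n) (hb : b < n) : (b + n - a) % n = 0 ↔ a = b := by
  rw [mod_two n _ (by omega)]; split_ifs <;> omega
lemma M2 {n a c : ℕ} (ha : a < n) (hc : c < n) : (((a + c) % n) + n - a) % n = c := by
  rw [mod_two n (a + c) (by omega)]
  split_ifs with h1 <;> rw [mod_two n _ (by omega)] <;> split_ifs <;> omega
lemma M3 {n a b z e f : ℕ} (ha : a < n) (hb : b < n) (hz : z < n)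
    (he : (b + n - a) % n = e) (hf : (z + n - a) % n = f) (hfe : f ≤ e) :
    (b + n - z) % n = e - f := by
  rw [mod_two n _ (by omega)] at he hf ⊢
  split_ifs at he hf ⊢ <;> omega
lemma Mtri {n a b z : ℕ} (ha : a < n) (hb : b < n) (hz : z < n) :
    min ((b + n - a) % n) (n - (b + n - a) % n) ≤
      min ((z + n - a) % n) (n - (z + n - a) % n) +
      min ((b + n - z) % n) (n - (b + n - z) % n) := by
  rw [mod_two n (b + n - a) (by omega), mod_two n (z + n - a) (by omega),
    mod_two n (b + n - z) (by omega)]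
  split_ifs <;> omega

section Har
variable {m h : ℕ}

lemma adj_iff (hm : 1 ≤ m) (hh : 1 ≤ h) (x y : Fin (2 * h)) :
    (hararyOddEven (2 * m + 1) (2 * h)).Adj x y ↔
      x ≠ y ∧ (circDist (2 * h) x y ≤ m ∨ circDist (2 * h) x y = h) := by
  show x ≠ y ∧ (circDist (2 * h) x y ≤ (2 * m + 1 - 1) / 2 ∨ circDist (2 * h) x y = 2 * h / 2) ↔ _
  rw [show (2 * m + 1 - 1) / 2 = m by omega, show 2 * h / 2 = h by omega]

lemma ne_of_u {x y : Fin (2 * h)} {e : ℕ} (hxy : (y.val + 2 * h - x.val) % (2 * h) = e)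
    (he : e ≠ 0) : x ≠ y := by
  intro hxyeq
  exact he (hxy ▸ ((M1 x.isLt y.isLt).mpr (by rw [hxyeq])))

lemma eq_of_u {x y : Fin (2 * h)} (hxy : (y.val + 2 * h - x.val) % (2 * h) = 0) : x = y :=
  Fin.ext ((M1 x.isLt y.isLt).mp hxy)

lemma cd_of_u (hh : 1 ≤ h) {x y : Fin (2 * h)} {e : ℕ}
    (hxy : (y.val + 2 * h - x.val) % (2 * h) = e) (he : e ≤ h) :
    circDist (2 * h) x y = e := by
  rw [circ_rep (by omega) x y, hxy]
  omega

lemma U2 (hm : 1 ≤ m) (hh : 3 * m + 2 ≤ h) :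
    ∀ e, e ≤ h → ∀ x y : Fin (2 * h), (y.val + 2 * h - x.val) % (2 * h) = e →
      (hararyOddEven (2 * m + 1) (2 * h)).Reachable x y ∧
        (hararyOddEven (2 * m + 1) (2 * h)).dist x y ≤ cdiv e m := by
  intro e
  induction e using Nat.strong_induction_on with
  | _ e IH =>
  intro he x y hxy
  rcases Nat.eq_zero_or_pos e with h0 | h0
  · subst h0
    obtain rfl := eq_of_u hxy
    exact ⟨Reachable.refl x, by rw [SimpleGraph.dist_self, cdiv_zero m hm]⟩
  by_cases h1 : e ≤ m
  · have hadj : (hararyOddEven (2 * m + 1) (2 * h)).Adj x y := by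
      rw [adj_iff hm (by omega)]
      exact ⟨ne_of_u hxy (by omega), Or.inl (by rw [cd_of_u (by omega) hxy (by omega)]; exact h1)⟩
    refine ⟨hadj.reachable, ?_⟩
    rw [SimpleGraph.dist_eq_one_iff_adj.mpr hadj]
    rw [le_cdiv_iff hm e 1 (by omega)]
    omega
  · -- e > m
    have hnpos : 0 < 2 * h := by omega
    set z : Fin (2 * h) := ⟨(x.val + (e - m)) % (2 * h), Nat.mod_lt _ hnpos⟩ with hzdef
    have hz : (z.val + 2 * h - x.val) % (2 * h) = e - m := M2 x.isLt (by omega)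
    obtain ⟨rxz, dxz⟩ := IH (e - m) (by omega) (by omega) x z hz
    have hzy : (y.val + 2 * h - z.val) % (2 * h) = m := by
      have := M3 x.isLt y.isLt z.isLt hxy hz (by omega)
      rwa [show e - (e - m) = m by omega] at this
    have hadj : (hararyOddEven (2 * m + 1) (2 * h)).Adj z y := by
      rw [adj_iff hm (by omega)]
      exact ⟨ne_of_u hzy (by omega), Or.inl (le_of_eq (cd_of_u (by omega) hzy (by omega)))⟩
    refine ⟨rxz.trans hadj.reachable, ?_⟩
    obtain ⟨p, hp⟩ := rxz.exists_walk_length_eq_dist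
    have hdle : (hararyOddEven (2 * m + 1) (2 * h)).dist x y ≤ p.length + 1 := by
      have := SimpleGraph.dist_le (p.concat hadj)
      rwa [SimpleGraph.Walk.length_concat] at this
    have : cdiv e m = cdiv (e - m) m + 1 := by
      rw [← cdiv_add_m hm (e - m), show e - m + m = e by omega]
    omega
end Har

section Har2
variable {m h : ℕ}

lemma M5 {n a b e : ℕ} (ha : a < n) (hb : b < n) (he : (b + n - a) % n = e) (h0 : e ≠ 0) :
    (a + n - b) % n = n - e := by
  rw [mod_two n _ (by omega)] at he ⊢
  split_ifs at he ⊢ <;> omega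

lemma cd_le_h (hh : 1 ≤ h) (x y : Fin (2 * h)) : circDist (2 * h) x y ≤ h := by
  rw [circ_rep (by omega) x y]
  have := Nat.mod_lt (y.val + 2 * h - x.val) (y := 2 * h) (by omega)
  omega

lemma circ_tri (hh : 1 ≤ h) (x y z : Fin (2 * h)) :
    circDist (2 * h) x y ≤ circDist (2 * h) x z + circDist (2 * h) z y := by
  rw [circ_rep (by omega) x y, circ_rep (by omega) x z, circ_rep (by omega) z y]
  exact Mtri x.isLt y.isLt z.isLt

lemma UB' (hm : 1 ≤ m) (hh : 3 * m + 2 ≤ h) (x y : Fin (2 * h))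
    (he : (y.val + 2 * h - x.val) % (2 * h) ≤ h) :
    (hararyOddEven (2 * m + 1) (2 * h)).Reachable x y ∧
      (hararyOddEven (2 * m + 1) (2 * h)).dist x y ≤ dlt m h (circDist (2 * h) x y) := by
  set e := (y.val + 2 * h - x.val) % (2 * h) with hedef
  have hd : circDist (2 * h) x y = e := cd_of_u (by omega) rfl he
  obtain ⟨r1, b1⟩ := U2 hm hh e he x y rfl
  set z : Fin (2 * h) := ⟨(x.val + h) % (2 * h), Nat.mod_lt _ (by omega)⟩ with hzdef
  have hz : (z.val + 2 * h - x.val) % (2 * h) = h := M2 x.isLt (by omega)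
  have hadj : (hararyOddEven (2 * m + 1) (2 * h)).Adj x z := by
    rw [adj_iff hm (by omega)]
    exact ⟨ne_of_u hz (by omega), Or.inr (cd_of_u (by omega) hz le_rfl)⟩
  have hyz : (z.val + 2 * h - y.val) % (2 * h) = h - e :=
    M3 x.isLt z.isLt y.isLt hz rfl he
  obtain ⟨r2, b2⟩ := U2 hm hh (h - e) (by omega) y z hyz
  obtain ⟨p, hp⟩ := r2.exists_walk_length_eq_dist
  have hdle : (hararyOddEven (2 * m + 1) (2 * h)).dist x y ≤ 1 + cdiv (h - e) m := by
    have := SimpleGraph.dist_le (SimpleGraph.Walk.cons hadj p.reverse)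
    rw [SimpleGraph.Walk.length_cons, SimpleGraph.Walk.length_reverse] at this
    omega
  refine ⟨(hadj.reachable.trans (r2.symm)), ?_⟩
  rw [hd]; unfold dlt
  exact le_min b1 hdle

lemma UB (hm : 1 ≤ m) (hh : 3 * m + 2 ≤ h) (x y : Fin (2 * h)) :
    (hararyOddEven (2 * m + 1) (2 * h)).Reachable x y ∧
      (hararyOddEven (2 * m + 1) (2 * h)).dist x y ≤ dlt m h (circDist (2 * h) x y) := by
  set e := (y.val + 2 * h - x.val) % (2 * h) with hedef
  have hel : e < 2 * h := Nat.mod_lt _ (by omega)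
  by_cases he : e ≤ h
  · exact UB' hm hh x y he
  · have h0 : e ≠ 0 := by omega
    have hxy : (x.val + 2 * h - y.val) % (2 * h) = 2 * h - e := M5 x.isLt y.isLt rfl h0
    obtain ⟨r, b⟩ := UB' hm hh y x (by rw [hxy]; omega)
    refine ⟨r.symm, ?_⟩
    rw [SimpleGraph.dist_comm, show circDist (2 * h) x y = circDist (2 * h) y x from
      min_comm _ _]
    exact b

lemma dlt_step (hm : 1 ≤ m) {d d' : ℕ} (hd : d ≤ h) (hd' : d' ≤ h)
    (h1 : d ≤ d' + m) (h2 : d' ≤ d + m) : dlt m h d ≤ dlt m h d' + 1 := by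
  have c1 : cdiv d m ≤ cdiv d' m + 1 := cdiv_le_succ hm h1
  have c2 : cdiv (h - d) m ≤ cdiv (h - d') m + 1 := cdiv_le_succ hm (by omega)
  unfold dlt
  omega

lemma dlt_antip {d : ℕ} (hd : d ≤ h) : dlt m h d ≤ dlt m h (h - d) + 1 := by
  unfold dlt
  rw [show h - (h - d) = d by omega]
  omega

lemma cd_self_s17 (hh : 1 ≤ h) (x : Fin (2 * h)) : circDist (2 * h) x x = 0 := by
  rw [circ_rep (by omega) x x, show x.val + 2 * h - x.val = 2 * h by omega,
    Nat.mod_self]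
  omega

lemma u_of_cd_h (hh : 1 ≤ h) {x z : Fin (2 * h)} (hcd : circDist (2 * h) x z = h) :
    (z.val + 2 * h - x.val) % (2 * h) = h := by
  rw [circ_rep (by omega) x z] at hcd
  have := Nat.mod_lt (z.val + 2 * h - x.val) (y := 2 * h) (by omega)
  omega

lemma cd_antip (hh : 1 ≤ h) {x z : Fin (2 * h)} (hcd : circDist (2 * h) x z = h)
    (y : Fin (2 * h)) : circDist (2 * h) z y = h - circDist (2 * h) x y := by
  have hz : (z.val + 2 * h - x.val) % (2 * h) = h := u_of_cd_h hh hcd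
  set e := (y.val + 2 * h - x.val) % (2 * h) with hedef
  have hel : e < 2 * h := Nat.mod_lt _ (by omega)
  by_cases he : e ≤ h
  · have hyz : (z.val + 2 * h - y.val) % (2 * h) = h - e := M3 x.isLt z.isLt y.isLt hz rfl he
    rw [cd_of_u hh rfl he, show circDist (2 * h) z y = circDist (2 * h) y z from min_comm _ _,
      cd_of_u hh hyz (by omega)]
  · have hzy : (y.val + 2 * h - z.val) % (2 * h) = e - h := M3 x.isLt y.isLt z.isLt rfl hz (by omega)
    rw [cd_of_u hh hzy (by omega), circ_rep (by omega) x y, ← hedef]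
    omega

lemma LBwalk (hm : 1 ≤ m) (hh : 3 * m + 2 ≤ h) (x y : Fin (2 * h))
    (p : (hararyOddEven (2 * m + 1) (2 * h)).Walk x y) :
    dlt m h (circDist (2 * h) x y) ≤ p.length := by
  induction p with
  | nil =>
    rename_i x
    rw [cd_self_s17 (by omega) x]
    simp [dlt, cdiv_zero m hm]
  | @cons x z y hadj p IH =>
    rw [SimpleGraph.Walk.length_cons]
    rw [adj_iff hm (by omega)] at hadj
    rcases hadj.2 with hle | hant
    · have t1 := circ_tri (by omega) x y z
      have t2 := circ_tri (by omega) z y x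
      rw [show circDist (2 * h) z x = circDist (2 * h) x z from min_comm _ _] at t2
      have := dlt_step (h := h) hm (cd_le_h (by omega) x y) (cd_le_h (by omega) z y)
        (by omega) (by omega)
      omega
    · have := cd_antip (by omega) hant y
      have h2 := dlt_antip (m := m) (cd_le_h (h := h) (by omega) x y)
      rw [← this] at h2
      omega

lemma DIST (hm : 1 ≤ m) (hh : 3 * m + 2 ≤ h) (x y : Fin (2 * h)) :
    (hararyOddEven (2 * m + 1) (2 * h)).dist x y = dlt m h (circDist (2 * h) x y) := by
  obtain ⟨r, ub⟩ := UB hm hh x y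
  refine le_antisymm ub ?_
  obtain ⟨p, hp⟩ := r.exists_walk_length_eq_dist
  rw [← hp]
  exact LBwalk hm hh x y p
end Har2

section ArithX

variable {m h q r : ℕ}

lemma dlt_le_D (hm : 1 ≤ m) (hr : r < 2 * m) (hqr : h = 2 * m * q + r + m + 2)
    {d : ℕ} (hd : d ≤ h) : dlt m h d ≤ q + 2 := by
  by_contra hc
  push_neg at hc
  rw [dlt, lt_min_iff] at hc
  obtain ⟨h1, h2⟩ := hc
  rw [show q + 2 < cdiv d m ↔ q + 3 ≤ cdiv d m from Iff.rfl, le_cdiv_iff hm d (q+3) (by omega)] at h1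
  have h2' : q + 2 ≤ cdiv (h - d) m := by omega
  rw [le_cdiv_iff hm (h - d) (q+2) (by omega)] at h2'
  simp only [show q + 3 - 1 = q + 2 by omega, show q + 2 - 1 = q + 1 by omega] at h1 h2'
  have e1 : m * (q + 2) = m * q + 2 * m := by ring
  have e2 : m * (q + 1) = m * q + m := by ring
  have e3 : 2 * m * q = 2 * (m * q) := by ring
  omega

lemma dlt_critical (hm : 1 ≤ m) (hr : r < 2 * m) (hqr : h = 2 * m * q + r + m + 2) :
    m * (q + 1) + 1 ≤ h ∧ dlt m h (m * (q + 1) + 1) = q + 2 := by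
  have e2 : m * (q + 1) = m * q + m := by ring
  have e3 : 2 * m * q = 2 * (m * q) := by ring
  constructor
  · omega
  rw [dlt]
  have c1 : cdiv (m * (q + 1) + 1) m = q + 2 := by
    have u1 : q + 2 ≤ cdiv (m * (q + 1) + 1) m := by
      rw [le_cdiv_iff hm _ _ (by omega), show q + 2 - 1 = q + 1 by omega]
    have u2 : cdiv (m * (q + 1) + 1) m ≤ q + 2 := by
      rw [cdiv_le_iff hm]
      have : m * (q + 2) = m * (q + 1) + m := by ring
      omega
    omega
  rw [c1]
  have c2 : q + 1 ≤ cdiv (h - (m * (q + 1) + 1)) m := by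
    rw [le_cdiv_iff hm _ _ (by omega), show q + 1 - 1 = q by omega]
    omega
  omega

lemma dlt_ge (hm : 1 ≤ m) {d : ℕ} (hd1 : 1 ≤ d) : 1 ≤ dlt m h d := by
  rw [dlt, le_min_iff]
  constructor
  · rw [le_cdiv_iff hm _ _ (by omega)]; omega
  · omega

/-- characterization of level sets for j ≥ 2 -/
lemma level_count (hm : 1 ≤ m) (hr : r < 2 * m) (hqr : h = 2 * m * q + r + m + 2)
    {j : ℕ} (hj2 : 2 ≤ j) (hjD : j ≤ q + 2) :
    ((Icc 1 h).filter (fun d => j ≤ dlt m h d)).card = 2 * m * (q + 2 - j) + r + 1 := by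
  have key : (Icc 1 h).filter (fun d => j ≤ dlt m h d)
      = Icc (m * (j - 1) + 1) (h - m * (j - 2) - 1) := by
    ext d
    simp only [mem_filter, mem_Icc]
    constructor
    · rintro ⟨⟨hd1, hdh⟩, hdlt⟩
      rw [dlt, le_min_iff, le_cdiv_iff hm _ _ (by omega)] at hdlt
      obtain ⟨u1, u2⟩ := hdlt
      have u2' : j - 1 ≤ cdiv (h - d) m := by omega
      rw [le_cdiv_iff hm _ _ (by omega), show j - 1 - 1 = j - 2 by omega] at u2'
      omega
    · rintro ⟨hd1, hd2⟩
      have e1 : m * (j - 1) = m * (j - 2) + m := by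
        have : j - 1 = (j - 2) + 1 := by omega
        rw [this]; ring
      have hdh : d ≤ h := by omega
      refine ⟨⟨by omega, hdh⟩, ?_⟩
      rw [dlt, le_min_iff, le_cdiv_iff hm _ _ (by omega)]
      refine ⟨by omega, ?_⟩
      have : j - 1 ≤ cdiv (h - d) m := by
        rw [le_cdiv_iff hm _ _ (by omega), show j - 1 - 1 = j - 2 by omega]
        omega
      omega
  rw [key, Nat.card_Icc]
  have e1 : m * (j - 1) = m * (j - 2) + m := by
    have : j - 1 = (j - 2) + 1 := by omega
    rw [this]; ring
  have e4 : 2 * m * q + 2 * m * 2 = 2 * m * (q + 2) := by ring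
  have e5 : 2 * m * (q + 2) = 2 * m * (q + 2 - j) + 2 * m * j := by
    rw [← Nat.mul_add]
    congr 1
    omega
  have e6 : 2 * m * j = 2 * (m * j) := by ring
  have e7 : m * j = m * (j - 2) + 2 * m := by
    have : j = (j - 2) + 2 := by omega
    nth_rewrite 1 [this]; ring
  omega

lemma level_one (hm : 1 ≤ m) :
    ((Icc 1 h).filter (fun d => 1 ≤ dlt m h d)).card = h := by
  rw [Finset.filter_true_of_mem, Nat.card_Icc]
  · omega
  · intro d hd
    rw [mem_Icc] at hd
    exact dlt_ge hm hd.1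

lemma layer_cake (hm : 1 ≤ m) (hr : r < 2 * m) (hqr : h = 2 * m * q + r + m + 2) :
    ∑ d ∈ Icc 1 h, dlt m h d
      = ∑ j ∈ Icc 1 (q + 2), ((Icc 1 h).filter (fun d => j ≤ dlt m h d)).card := by
  have step : ∀ d ∈ Icc 1 h, dlt m h d
      = ∑ j ∈ Icc 1 (q + 2), if j ≤ dlt m h d then 1 else 0 := by
    intro d hd
    rw [mem_Icc] at hd
    rw [← Finset.sum_filter]
    have : (Icc 1 (q + 2)).filter (fun j => j ≤ dlt m h d) = Icc 1 (dlt m h d) := by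
      ext j
      simp only [mem_filter, mem_Icc]
      have := dlt_le_D hm hr hqr hd.2
      omega
    rw [this]
    simp only [Finset.sum_const, Nat.card_Icc, smul_eq_mul, mul_one]
    omega
  rw [Finset.sum_congr rfl step, Finset.sum_comm]
  refine Finset.sum_congr rfl fun j hj => ?_
  rw [Finset.card_filter]

lemma gauss_sum (m r : ℕ) : ∀ q : ℕ,
    ∑ j ∈ Icc 2 (q + 2), (2 * m * (q + 2 - j) + r + 1)
      = m * (q + 1) * q + (q + 1) * (r + 1) := by
  intro q
  induction q with
  | zero => simp
  | succ q' IH =>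
    rw [show Icc 2 (q' + 1 + 2) = Icc 2 (q' + 2) ∪ {q' + 3} by
      ext j; simp only [mem_Icc, mem_union, mem_singleton]; omega,
      Finset.sum_union (by simp only [Finset.disjoint_singleton_right, mem_Icc]; omega)]
    have congr2 : ∑ j ∈ Icc 2 (q' + 2), (2 * m * (q' + 1 + 2 - j) + r + 1)
        = ∑ j ∈ Icc 2 (q' + 2), (2 * m * (q' + 2 - j) + r + 1 + 2 * m) := by
      refine Finset.sum_congr rfl fun j hj => ?_
      rw [mem_Icc] at hj
      have : 2 * m * (q' + 1 + 2 - j) = 2 * m * (q' + 2 - j) + 2 * m := by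
        rw [show q' + 1 + 2 - j = (q' + 2 - j) + 1 by omega]; ring
      omega
    rw [congr2, Finset.sum_add_distrib, IH, Finset.sum_const, Nat.card_Icc,
      Finset.sum_singleton, show q' + 1 + 2 - (q' + 3) = 0 by omega]
    simp only [smul_eq_mul, Nat.mul_zero, Nat.zero_add, show q' + 2 + 1 - 2 = q' + 1 by omega]
    ring


lemma S_val (hm : 1 ≤ m) (hr : r < 2 * m) (hqr : h = 2 * m * q + r + m + 2) :
    ∑ d ∈ Icc 1 h, dlt m h d = h + (m * (q + 1) * q + (q + 1) * (r + 1)) := by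
  rw [layer_cake hm hr hqr]
  rw [show Icc 1 (q + 2) = Icc 1 1 ∪ Icc 2 (q + 2) by
    ext j; simp only [mem_Icc, mem_union]; omega,
    Finset.sum_union (by
      rw [Finset.disjoint_left]; intro a ha hb; simp only [mem_Icc] at ha hb; omega)]
  rw [Finset.sum_congr (rfl : Icc 2 (q+2) = Icc 2 (q+2))
    (fun j hj => level_count hm hr hqr (mem_Icc.mp hj).1 (mem_Icc.mp hj).2)]
  simp only [Finset.Icc_self, Finset.sum_singleton, level_one hm]
  rw [gauss_sum]

end ArithX

lemma M6 {n a b : ℕ} (ha : a < n) (hb : b < n) : (a + (b + n - a) % n) % n = b := by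
  rw [mod_two n (b + n - a) (by omega)]
  split_ifs with h1 <;> rw [mod_two n _ (by omega)] <;> split_ifs <;> omega

lemma sum_reindex {h : ℕ} (hh : 1 ≤ h) (x : Fin (2 * h)) (g : ℕ → ℕ) :
    ∑ y : Fin (2 * h), g ((y.val + 2 * h - x.val) % (2 * h))
      = ∑ u ∈ Finset.range (2 * h), g u := by
  refine Finset.sum_nbij' (fun y => (y.val + 2 * h - x.val) % (2 * h))
    (fun u => ⟨(x.val + u) % (2 * h), Nat.mod_lt _ (by omega)⟩) ?_ ?_ ?_ ?_ ?_
  · intro y _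
    exact Finset.mem_range.mpr (Nat.mod_lt _ (by omega))
  · intro u _
    exact Finset.mem_univ _
  · intro y _
    exact Fin.ext (M6 x.isLt y.isLt)
  · intro u hu
    exact M2 x.isLt (Finset.mem_range.mp hu)
  · intro y _
    rfl

lemma sum_circ {h : ℕ} (hh : 1 ≤ h) (g : ℕ → ℕ) :
    ∑ u ∈ Finset.range (2 * h), g (min u (2 * h - u))
      = g 0 + ∑ d ∈ Icc 1 h, g d + ∑ d ∈ Icc 1 (h - 1), g d := by
  rw [Finset.range_eq_Ico, ← Finset.sum_Ico_consecutive _ (by omega : 0 ≤ h + 1)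
    (by omega : h + 1 ≤ 2 * h)]
  have e1 : ∑ u ∈ Finset.Ico 0 (h + 1), g (min u (2 * h - u))
      = g 0 + ∑ d ∈ Icc 1 h, g d := by
    rw [← Finset.sum_Ico_consecutive _ (by omega : 0 ≤ 1) (by omega : 1 ≤ h + 1)]
    congr 1
    · rw [show Finset.Ico 1 (h + 1) = Icc 1 h by rw [Finset.Ico_add_one_right_eq_Icc]]
      refine Finset.sum_congr rfl fun u hu => ?_
      rw [mem_Icc] at hu
      congr 1
      omega
  have e2 : ∑ u ∈ Finset.Ico (h + 1) (2 * h), g (min u (2 * h - u))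
      = ∑ d ∈ Icc 1 (h - 1), g d := by
    refine Finset.sum_nbij' (fun u => 2 * h - u) (fun d => 2 * h - d) ?_ ?_ ?_ ?_ ?_
    · intro u hu; rw [Finset.mem_Ico] at hu; rw [mem_Icc]; omega
    · intro d hd; rw [mem_Icc] at hd; rw [Finset.mem_Ico]; omega
    · intro u hu; rw [Finset.mem_Ico] at hu; omega
    · intro d hd; rw [mem_Icc] at hd; omega
    · intro u hu; rw [Finset.mem_Ico] at hu; congr 1; omega
  omega

/-- For `k ≥ 3` odd, `n ≥ 3k + 1` even, with `D = ⌊(n-k-3)/(2(k-1))⌋ + 2`: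
`H_{k,n}` has diameter `D` and Wiener index
`(1/4)·n·D·(2n+4k-8-2(k-1)D) - (1/2)·n·(k-2)`. -/
theorem hararyOddEven_large (k n : ℕ) (hk : 3 ≤ k) (hko : Odd k) (hne : Even n)
    (h1 : 3 * k + 1 ≤ n) :
    graphDiam (hararyOddEven k n) = (n - k - 3) / (2 * (k - 1)) + 2 ∧
    wiener (hararyOddEven k n) =
      (1 / 4 : ℚ) * (n : ℚ) * (((n - k - 3) / (2 * (k - 1)) + 2 : ℕ) : ℚ) *
        (2 * (n : ℚ) + 4 * (k : ℚ) - 8 -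
          2 * ((k : ℚ) - 1) * (((n - k - 3) / (2 * (k - 1)) + 2 : ℕ) : ℚ)) -
      (1 / 2 : ℚ) * (n : ℚ) * ((k : ℚ) - 2) := by
  -- normalize k and n
  obtain ⟨m, rfl⟩ := hko
  obtain ⟨h, rfl⟩ : ∃ h', n = 2 * h' := ⟨n / 2, by rcases hne with ⟨t, ht⟩; omega⟩
  have hm : 1 ≤ m := by omega
  have hh : 3 * m + 2 ≤ h := by omega
  set q : ℕ := (h - m - 2) / (2 * m) with hqdef
  set r : ℕ := (h - m - 2) % (2 * m) with hrdef
  have hr : r < 2 * m := Nat.mod_lt _ (by omega)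
  have hqr : h = 2 * m * q + r + m + 2 := by
    have := Nat.div_add_mod (h - m - 2) (2 * m)
    rw [← hqdef, ← hrdef] at this
    omega
  have hD : (2 * h - (2 * m + 1) - 3) / (2 * (2 * m + 1 - 1)) + 2 = q + 2 := by
    rw [show 2 * h - (2 * m + 1) - 3 = 2 * (h - m - 2) by omega,
      show 2 * (2 * m + 1 - 1) = 2 * (2 * m) by omega,
      Nat.mul_div_mul_left _ _ (by omega : 0 < 2)]
  -- distance facts
  have hdist : ∀ x y : Fin (2 * h),
      (hararyOddEven (2 * m + 1) (2 * h)).dist x y = dlt m h (circDist (2 * h) x y) :=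
    DIST hm hh
  -- status : sum of distances from any vertex
  set S : ℕ := ∑ d ∈ Icc 1 h, dlt m h d with hSdef
  have hSval : S = h + (m * (q + 1) * q + (q + 1) * (r + 1)) := S_val hm hr hqr
  have hdh1 : dlt m h h = 1 := by
    rw [dlt, Nat.sub_self, cdiv_zero m hm]
    have h1 : 1 ≤ cdiv h m := by rw [le_cdiv_iff hm _ _ one_pos]; omega
    omega
  have hdlt0 : dlt m h 0 = 0 := by
    rw [dlt, cdiv_zero m hm]
    omega
  have hsplit : S = dlt m h h + ∑ d ∈ Icc 1 (h - 1), dlt m h d := by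
    rw [hSdef, show Icc 1 h = insert h (Icc 1 (h - 1)) from by
      ext a; simp only [Finset.mem_insert, mem_Icc]; omega,
      Finset.sum_insert (by simp only [mem_Icc]; omega)]
  have hstatus : ∀ x : Fin (2 * h),
      ∑ y : Fin (2 * h), (hararyOddEven (2 * m + 1) (2 * h)).dist x y = 2 * S - 1 := by
    intro x
    rw [Finset.sum_congr rfl (fun y _ => hdist x y),
      Finset.sum_congr rfl (fun y _ => by rw [circ_rep (by omega : 0 < 2 * h) x y]),
      sum_reindex (by omega : 1 ≤ h) x (fun u => dlt m h (min u (2 * h - u))),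
      sum_circ (by omega : 1 ≤ h) (dlt m h)]
    have : min (0:ℕ) (2 * h - 0) = 0 := by omega
    rw [this] at * -- no-op safeguard
    omega
  constructor
  · -- diameter
    apply le_antisymm
    · apply Finset.sup_le
      intro p _
      rw [hdist p.1 p.2, hD]
      exact dlt_le_D hm hr hqr (cd_le_h (by omega) p.1 p.2)
    · obtain ⟨hd0h, hcrit⟩ := dlt_critical (q := q) (r := r) hm hr hqr
      set x0 : Fin (2 * h) := ⟨0, by omega⟩
      set y0 : Fin (2 * h) := ⟨m * (q + 1) + 1, by omega⟩
      have hu : (y0.val + 2 * h - x0.val) % (2 * h) = m * (q + 1) + 1 := by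
        show (m * (q + 1) + 1 + 2 * h - 0) % (2 * h) = m * (q + 1) + 1
        rw [Nat.sub_zero, Nat.add_mod_right]
        exact Nat.mod_eq_of_lt (by omega)
      have hcd : circDist (2 * h) x0 y0 = m * (q + 1) + 1 := cd_of_u (by omega) hu hd0h
      have hval : (hararyOddEven (2 * m + 1) (2 * h)).dist x0 y0 = q + 2 := by
        rw [hdist x0 y0, hcd, hcrit]
      rw [hD]
      calc q + 2 = (hararyOddEven (2 * m + 1) (2 * h)).dist x0 y0 := hval.symm
        _ ≤ _ := Finset.le_sup (f := fun p : Fin (2 * h) × Fin (2 * h) =>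
            (hararyOddEven (2 * m + 1) (2 * h)).dist p.1 p.2) (Finset.mem_univ (x0, y0))
  · -- Wiener index
    have hsum1 : ∑ p ∈ (Finset.univ : Finset (Fin (2 * h))).offDiag,
        ((hararyOddEven (2 * m + 1) (2 * h)).dist p.1 p.2 : ℚ)
        = ∑ p ∈ (Finset.univ : Finset (Fin (2 * h))) ×ˢ Finset.univ,
          ((hararyOddEven (2 * m + 1) (2 * h)).dist p.1 p.2 : ℚ) := by
      refine Finset.sum_subset ?_ ?_
      · intro p hp
        rw [Finset.mem_offDiag] at hp
        exact Finset.mem_product.mpr ⟨hp.1, hp.2.1⟩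
      · intro p hp hnp
        have : p.1 = p.2 := by
          rw [Finset.mem_offDiag] at hnp
          push_neg at hnp
          exact hnp (Finset.mem_univ _) (Finset.mem_univ _)
        rw [this, SimpleGraph.dist_self, Nat.cast_zero]
    have hsum2 : ∑ p ∈ (Finset.univ : Finset (Fin (2 * h))) ×ˢ Finset.univ,
        ((hararyOddEven (2 * m + 1) (2 * h)).dist p.1 p.2 : ℚ)
        = (2 * h : ℚ) * ((2 * S - 1 : ℕ) : ℚ) := by
      rw [Finset.sum_product]
      have : ∀ x : Fin (2 * h), ∑ y : Fin (2 * h),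
          ((hararyOddEven (2 * m + 1) (2 * h)).dist x y : ℚ) = ((2 * S - 1 : ℕ) : ℚ) := by
        intro x
        rw [← Nat.cast_sum]
        exact_mod_cast congrArg (Nat.cast : ℕ → ℚ) (hstatus x)
      rw [Finset.sum_congr rfl (fun x _ => this x), Finset.sum_const, Finset.card_univ,
        Fintype.card_fin, nsmul_eq_mul]
      push_cast
      ring
    have hS1 : 1 ≤ S := by omega
    rw [wiener, hsum1, hsum2, hD]
    have hScast : ((2 * S - 1 : ℕ) : ℚ) = 2 * (S : ℚ) - 1 := by
      rw [Nat.cast_sub (by omega)]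
      push_cast
      ring
    have hSQ : (S : ℚ) = (h : ℚ) + ((m : ℚ) * ((q : ℚ) + 1) * (q : ℚ)
        + ((q : ℚ) + 1) * ((r : ℚ) + 1)) := by
      exact_mod_cast congrArg (Nat.cast : ℕ → ℚ) hSval
    have hhQ : (h : ℚ) = 2 * (m : ℚ) * (q : ℚ) + (r : ℚ) + (m : ℚ) + 2 := by
      exact_mod_cast congrArg (Nat.cast : ℕ → ℚ) hqr
    rw [hScast]
    push_cast
    rw [hSQ, hhQ]
    ring
end

section
/- Let k ≥ 3 and n > k + 1 with both k and n odd, and suppose k + 1 < n ≤ 3k - 2. Then H_{k,n} has diameter 2, the unique vertex of degree k+1 has status 2n-k-3, every vertex of degree k has status 2n-k-2, and W(H_{k,n}) = (1/2)·n·(2n-k-2) - 1/2. -/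
open Finset SimpleGraph

set_option maxHeartbeats 1000000

lemma harary_circDist_eq (n : ℕ) (i j : Fin n) :
    circDist n i j = min ((j.val - i.val) + (i.val - j.val))
      (n - ((j.val - i.val) + (i.val - j.val))) := by
  have hi := i.isLt; have hj := j.isLt
  unfold circDist
  rcases Nat.lt_trichotomy i.val j.val with hlt | heq | hgt
  · have e1 : (i.val + n - j.val) % n = i.val + n - j.val := Nat.mod_eq_of_lt (by omega)
    have e2 : (j.val + n - i.val) % n = j.val - i.val := by
      rw [Nat.mod_eq_sub_mod (by omega)]
      have : j.val + n - i.val - n = j.val - i.val := by omega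
      rw [this]; exact Nat.mod_eq_of_lt (by omega)
    omega
  · have e0 : i.val + n - j.val = n := by omega
    have e0' : j.val + n - i.val = n := by omega
    rw [e0, e0', Nat.mod_self]; omega
  · have e1 : (j.val + n - i.val) % n = j.val + n - i.val := Nat.mod_eq_of_lt (by omega)
    have e2 : (i.val + n - j.val) % n = i.val - j.val := by
      rw [Nat.mod_eq_sub_mod (by omega)]
      have : i.val + n - j.val - n = i.val - j.val := by omega
      rw [this]; exact Nat.mod_eq_of_lt (by omega)
    omega

lemma harary_adj_iff (k n m h : ℕ) (hk : k = 2*m+1) (hn : n = 2*h+1) (hmh : m + 1 ≤ h)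
    (x y : Fin n) :
    (hararyOddOdd k n).Adj x y ↔ x.val ≠ y.val ∧
      ((x.val ≤ y.val + m ∧ y.val ≤ x.val + m) ∨ x.val + m ≥ n + y.val ∨ y.val + m ≥ n + x.val
        ∨ (x.val ≤ h ∧ y.val = x.val + h) ∨ (y.val ≤ h ∧ x.val = y.val + h)) := by
  have hi := x.isLt; have hj := y.isLt
  have hm2 : (k-1)/2 = m := by omega
  have hh2 : (n-1)/2 = h := by omega
  have hcd := harary_circDist_eq n x y
  change (x ≠ y ∧ (circDist n x y ≤ (k - 1) / 2 ∨ ∃ a : Fin n, a.val ≤ (n - 1) / 2 ∧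
      ((x = a ∧ y.val = (a.val + (n - 1) / 2) % n) ∨
       (y = a ∧ x.val = (a.val + (n - 1) / 2) % n)))) ↔ _
  constructor
  · rintro ⟨hne, hcirc | ⟨a, ha, hc⟩⟩
    · refine ⟨fun hv => hne (Fin.ext hv), ?_⟩
      rw [hm2] at hcirc; omega
    · have hav := a.isLt
      rw [hh2] at ha hc
      have hmod : (a.val + h) % n = a.val + h := Nat.mod_eq_of_lt (by omega)
      rw [hmod] at hc
      refine ⟨fun hv => hne (Fin.ext hv), ?_⟩
      rcases hc with ⟨rfl, hyv⟩ | ⟨rfl, hxv⟩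
      · right; right; right; left; exact ⟨ha, hyv⟩
      · right; right; right; right; exact ⟨ha, hxv⟩
  · rintro ⟨hne, hd⟩
    refine ⟨fun hv => hne (congrArg Fin.val hv), ?_⟩
    rcases hd with hc | hc | hc | ⟨hxh, hyv⟩ | ⟨hyh, hxv⟩
    · left; rw [hm2]; omega
    · left; rw [hm2]; omega
    · left; rw [hm2]; omega
    · right; exact ⟨x, by rw [hh2]; exact hxh, Or.inl ⟨rfl, by
        rw [hh2, Nat.mod_eq_of_lt (by omega)]; exact hyv⟩⟩
    · right; exact ⟨y, by rw [hh2]; exact hyh, Or.inr ⟨rfl, by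
        rw [hh2, Nat.mod_eq_of_lt (by omega)]; exact hxv⟩⟩

lemma common_nbr_aux (n m h : ℕ) (G : SimpleGraph (Fin n))
    (hadj : ∀ x y : Fin n, G.Adj x y ↔ x.val ≠ y.val ∧
      ((x.val ≤ y.val + m ∧ y.val ≤ x.val + m) ∨ x.val + m ≥ n + y.val ∨ y.val + m ≥ n + x.val
        ∨ (x.val ≤ h ∧ y.val = x.val + h) ∨ (y.val ≤ h ∧ x.val = y.val + h)))
    (hm1 : 1 ≤ m) (hmh : m + 1 ≤ h) (hh3 : h ≤ 3*m) (hn : n = 2*h+1)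
    (x y : Fin n) (hlt : x.val < y.val) (hna : ¬ G.Adj x y) :
    ∃ z, G.Adj x z ∧ G.Adj z y := by
  have hi := x.isLt; have hj := y.isLt
  rw [hadj] at hna
  have hdis : ¬((x.val ≤ y.val + m ∧ y.val ≤ x.val + m) ∨ x.val + m ≥ n + y.val ∨
      y.val + m ≥ n + x.val ∨ (x.val ≤ h ∧ y.val = x.val + h) ∨
      (y.val ≤ h ∧ x.val = y.val + h)) := fun hd => hna ⟨by omega, hd⟩
  clear hna
  rcases le_or_gt (y.val - x.val) (2*m) with hA | hB
  · refine ⟨⟨x.val + m, by omega⟩, ?_, ?_⟩ <;> rw [hadj] <;>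
      simp only [Fin.val_mk, and_true, true_and] <;> omega
  rcases le_or_gt (x.val + n - y.val) (2*m) with hA2 | hB2
  · rcases le_or_gt m x.val with hma | hma
    · refine ⟨⟨x.val - m, by omega⟩, ?_, ?_⟩ <;> rw [hadj] <;>
        simp only [Fin.val_mk, and_true, true_and] <;> omega
    · refine ⟨⟨x.val + n - m, by omega⟩, ?_, ?_⟩ <;> rw [hadj] <;>
        simp only [Fin.val_mk, and_true, true_and] <;> omega
  rcases le_or_gt x.val h with hah | hah
  · refine ⟨⟨x.val + h, by omega⟩, ?_, ?_⟩ <;> rw [hadj] <;>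
      simp only [Fin.val_mk, and_true, true_and] <;> omega
  · refine ⟨⟨x.val - h, by omega⟩, ?_, ?_⟩ <;> rw [hadj] <;>
      simp only [Fin.val_mk, and_true, true_and] <;> omega

lemma deg_count (n m h : ℕ) (G : SimpleGraph (Fin n)) [DecidableRel G.Adj]
    (hadj : ∀ x y : Fin n, G.Adj x y ↔ x.val ≠ y.val ∧
      ((x.val ≤ y.val + m ∧ y.val ≤ x.val + m) ∨ x.val + m ≥ n + y.val ∨ y.val + m ≥ n + x.val
        ∨ (x.val ≤ h ∧ y.val = x.val + h) ∨ (y.val ≤ h ∧ x.val = y.val + h)))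
    (hm1 : 1 ≤ m) (hmh : m + 1 ≤ h) (hh3 : h ≤ 3*m) (hn : n = 2*h+1) (x : Fin n) :
    (univ.filter (fun y => G.Adj x y)).card = 2*m + 1 + (if x.val = h then 1 else 0) := by
  have hxn := x.isLt
  have hn0 : 0 < n := by omega
  set T : Finset ℕ := (range n).filter (fun t =>
    (1 ≤ t ∧ t ≤ m) ∨ (n - m ≤ t ∧ t < n) ∨ (x.val ≤ h ∧ t = h) ∨ (h ≤ x.val ∧ t = h+1))
    with hT
  have hmemT : ∀ t, t ∈ T ↔ t < n ∧ ((1 ≤ t ∧ t ≤ m) ∨ (n - m ≤ t ∧ t < n) ∨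
      (x.val ≤ h ∧ t = h) ∨ (h ≤ x.val ∧ t = h+1)) := by
    intro t; rw [hT, mem_filter, mem_range]
  have key : (univ.filter (fun y => G.Adj x y)).card = T.card := by
    refine (Finset.card_bij' (fun t _ => (⟨(x.val + t) % n, Nat.mod_lt _ hn0⟩ : Fin n))
      (fun y _ => (y.val + n - x.val) % n) ?_ ?_ ?_ ?_).symm
    · -- maps T into filter Adj
      intro t ht
      beta_reduce
      rw [hmemT] at ht
      rw [mem_filter]
      refine ⟨mem_univ _, ?_⟩
      rw [hadj]
      rcases Nat.lt_or_ge (x.val + t) n with hlt | hge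
      · have e1 : (x.val + t) % n = x.val + t := Nat.mod_eq_of_lt hlt
        simp only [Fin.val_mk, e1, and_true, true_and]
        omega
      · have e1 : (x.val + t) % n = x.val + t - n := by
          rw [Nat.mod_eq_sub_mod hge]; exact Nat.mod_eq_of_lt (by omega)
        simp only [Fin.val_mk, e1, and_true, true_and]
        omega
    · -- maps filter Adj into T
      intro y hy
      beta_reduce
      rw [mem_filter] at hy
      rw [hadj] at hy
      obtain ⟨-, hne, hc⟩ := hy
      have hyn := y.isLt
      rw [hmemT]
      rcases Nat.lt_or_ge x.val y.val with hxy | hxy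
      · have e1 : (y.val + n - x.val) % n = y.val - x.val := by
          rw [Nat.mod_eq_sub_mod (by omega)]
          have : y.val + n - x.val - n = y.val - x.val := by omega
          rw [this]; exact Nat.mod_eq_of_lt (by omega)
        rw [e1]; omega
      · have e1 : (y.val + n - x.val) % n = y.val + n - x.val := Nat.mod_eq_of_lt (by omega)
        rw [e1]; omega
    · -- left inverse on T
      intro t ht
      beta_reduce
      rw [hmemT] at ht
      rcases Nat.lt_or_ge (x.val + t) n with hlt | hge
      · have e1 : (x.val + t) % n = x.val + t := Nat.mod_eq_of_lt hlt
        simp only [Fin.val_mk, e1]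
        have : x.val + t + n - x.val = t + n := by omega
        rw [this, Nat.mod_eq_sub_mod (by omega)]
        have : t + n - n = t := by omega
        rw [this]; exact Nat.mod_eq_of_lt (by omega)
      · have e1 : (x.val + t) % n = x.val + t - n := by
          rw [Nat.mod_eq_sub_mod hge]; exact Nat.mod_eq_of_lt (by omega)
        simp only [Fin.val_mk, e1]
        have : x.val + t - n + n - x.val = t := by omega
        rw [this]; exact Nat.mod_eq_of_lt (by omega)
    · -- right inverse on filter Adj
      intro y hy
      rw [mem_filter, hadj] at hy
      obtain ⟨-, hne, -⟩ := hy
      have hyn := y.isLt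
      apply Fin.ext
      simp only [Fin.val_mk]
      rcases Nat.lt_or_ge x.val y.val with hxy | hxy
      · have e1 : (y.val + n - x.val) % n = y.val - x.val := by
          rw [Nat.mod_eq_sub_mod (by omega)]
          have : y.val + n - x.val - n = y.val - x.val := by omega
          rw [this]; exact Nat.mod_eq_of_lt (by omega)
        rw [e1]
        have : x.val + (y.val - x.val) = y.val := by omega
        rw [this]; exact Nat.mod_eq_of_lt (by omega)
      · have e1 : (y.val + n - x.val) % n = y.val + n - x.val := Nat.mod_eq_of_lt (by omega)
        rw [e1]
        have : x.val + (y.val + n - x.val) = y.val + n := by omega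
        rw [this, Nat.mod_eq_sub_mod (by omega)]
        have : y.val + n - n = y.val := by omega
        rw [this]; exact Nat.mod_eq_of_lt (by omega)
  rw [key]
  -- now compute T.card
  have hd1 : Disjoint (Finset.Ico 1 (m+1)) (Finset.Ico (n-m) n) := by
    rw [Finset.disjoint_left]; intro t ht ht'
    rw [mem_Ico] at ht ht'; omega
  have hc1 : (Finset.Ico 1 (m+1) ∪ Finset.Ico (n-m) n).card = 2*m := by
    rw [Finset.card_union_of_disjoint hd1, Nat.card_Ico, Nat.card_Ico]; omega
  rcases Nat.lt_trichotomy x.val h with hc | hc | hc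
  · have hTe : T = (Finset.Ico 1 (m+1) ∪ Finset.Ico (n-m) n) ∪ {h} := by
      ext t
      rw [hmemT]
      simp only [mem_union, mem_Ico, mem_singleton]
      omega
    rw [hTe, Finset.card_union_of_disjoint, hc1, Finset.card_singleton, if_neg (by omega : ¬ x.val = h)]
    · rw [Finset.disjoint_left]; intro t ht ht'
      simp only [mem_union, mem_Ico] at ht
      rw [mem_singleton] at ht'; omega
  · have hTe : T = (Finset.Ico 1 (m+1) ∪ Finset.Ico (n-m) n) ∪ {h, h+1} := by
      ext t
      rw [hmemT]
      simp only [mem_union, mem_Ico, mem_insert, mem_singleton]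
      omega
    rw [hTe, Finset.card_union_of_disjoint, hc1, if_pos hc]
    · rw [Finset.card_insert_of_notMem (by rw [mem_singleton]; omega), Finset.card_singleton]
    · rw [Finset.disjoint_left]; intro t ht ht'
      simp only [mem_union, mem_Ico] at ht
      simp only [mem_insert, mem_singleton] at ht'; omega
  · have hTe : T = (Finset.Ico 1 (m+1) ∪ Finset.Ico (n-m) n) ∪ {h+1} := by
      ext t
      rw [hmemT]
      simp only [mem_union, mem_Ico, mem_singleton]
      omega
    rw [hTe, Finset.card_union_of_disjoint, hc1, Finset.card_singleton, if_neg (by omega : ¬ x.val = h)]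
    · rw [Finset.disjoint_left]; intro t ht ht'
      simp only [mem_union, mem_Ico] at ht
      rw [mem_singleton] at ht'; omega

lemma dist_formula {V : Type*} [DecidableEq V] (G : SimpleGraph V) [DecidableRel G.Adj]
    (hcn : ∀ x y : V, x ≠ y → ¬ G.Adj x y → ∃ z, G.Adj x z ∧ G.Adj z y)
    (x y : V) :
    G.dist x y = if x = y then 0 else if G.Adj x y then 1 else 2 := by
  split
  · next heq => rw [heq]; exact SimpleGraph.dist_self
  · next hne =>
    split
    · next hA => exact SimpleGraph.dist_eq_one_iff_adj.mpr hA
    · next hA =>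
      obtain ⟨z, hxz, hzy⟩ := hcn x y hne hA
      have hle : G.dist x y ≤ 2 := by
        simpa using SimpleGraph.dist_le
          (SimpleGraph.Walk.cons hxz (SimpleGraph.Walk.cons hzy SimpleGraph.Walk.nil))
      have h0 : G.dist x y ≠ 0 := by
        intro hc
        rcases (SimpleGraph.dist_eq_zero_iff_eq_or_not_reachable).mp hc with h' | h'
        · exact hne h'
        · exact h' ⟨SimpleGraph.Walk.cons hxz (SimpleGraph.Walk.cons hzy SimpleGraph.Walk.nil)⟩
      have h1 : G.dist x y ≠ 1 := fun hc => hA (SimpleGraph.dist_eq_one_iff_adj.mp hc)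
      omega

lemma status_formula {V : Type*} [Fintype V] [DecidableEq V] (G : SimpleGraph V)
    [DecidableRel G.Adj]
    (hd : ∀ x y, G.dist x y = if x = y then 0 else if G.Adj x y then 1 else 2) (x : V) :
    status G x + ((univ.filter (fun y => G.Adj x y)).card + 2) = 2 * Fintype.card V := by
  have hsum : status G x = ∑ y, (if x = y then 0 else if G.Adj x y then 1 else 2) := by
    unfold status
    exact Finset.sum_congr rfl (fun y _ => hd x y)
  rw [hsum, ← Finset.sum_filter_add_sum_filter_not univ (fun y => G.Adj x y)]
  have hs1 : ∑ y ∈ univ.filter (fun y => G.Adj x y), (if x = y then 0 else if G.Adj x y then 1 else 2)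
      = (univ.filter (fun y => G.Adj x y)).card := by
    rw [Finset.card_eq_sum_ones]
    refine Finset.sum_congr rfl (fun y hy => ?_)
    rw [mem_filter] at hy
    rw [if_neg hy.2.ne, if_pos hy.2]
  have hxmem : x ∈ univ.filter (fun y => ¬ G.Adj x y) := by
    rw [mem_filter]; exact ⟨mem_univ _, G.loopless.irrefl x⟩
  have hs2 : ∑ y ∈ univ.filter (fun y => ¬ G.Adj x y), (if x = y then 0 else if G.Adj x y then 1 else 2)
      = ((univ.filter (fun y => ¬ G.Adj x y)).card - 1) * 2 := by
    rw [← Finset.sum_erase_add _ _ hxmem, if_pos rfl, add_zero]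
    have hcon : ∀ y ∈ (univ.filter (fun y => ¬ G.Adj x y)).erase x,
        (if x = y then 0 else if G.Adj x y then 1 else 2) = 2 := by
      intro y hy
      rw [if_neg (fun hc => (Finset.mem_erase.mp hy).1 hc.symm),
        if_neg ((Finset.mem_filter.mp (Finset.mem_of_mem_erase hy)).2)]
    rw [Finset.sum_congr rfl hcon, Finset.sum_const, Finset.card_erase_of_mem hxmem, smul_eq_mul]
  rw [hs1, hs2]
  have hcards := Finset.card_filter_add_card_filter_not (s := univ)
    (fun y => G.Adj x y)
  rw [Finset.card_univ] at hcards
  have hpos : 1 ≤ (univ.filter (fun y => ¬ G.Adj x y)).card :=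
    Finset.card_pos.mpr ⟨x, hxmem⟩
  omega

/-- For `k, n` both odd, `k ≥ 3`, `k + 1 < n ≤ 3k - 2`: `H_{k,n}` has diameter
`2`, the unique vertex `(n-1)/2` of degree `k+1` has status `2n-k-3`, every other
vertex (of degree `k`) has status `2n-k-2`, and
`W(H_{k,n}) = (1/2)·n·(2n-k-2) - 1/2`. -/
theorem hararyOddOdd_small (k n : ℕ) (hk : 3 ≤ k) (hko : Odd k) (hno : Odd n)
    (h1 : k + 1 < n) (h2 : n ≤ 3 * k - 2) :
    graphDiam (hararyOddOdd k n) = 2 ∧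
    status (hararyOddOdd k n) (⟨(n - 1) / 2, by omega⟩ : Fin n) = 2 * n - k - 3 ∧
    (∀ x : Fin n, x.val ≠ (n - 1) / 2 →
      status (hararyOddOdd k n) x = 2 * n - k - 2) ∧
    wiener (hararyOddOdd k n) =
      (1 / 2 : ℚ) * (n : ℚ) * (2 * (n : ℚ) - k - 2) - 1 / 2 := by
  classical
  obtain ⟨m0, hm0⟩ := hko
  obtain ⟨h0, hh0⟩ := hno
  set G := hararyOddOdd k n with hG
  have hk2 : k = 2*m0+1 := by omega
  have hn2 : n = 2*h0+1 := by omega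
  have hm1 : 1 ≤ m0 := by omega
  have hmh : m0 + 1 ≤ h0 := by omega
  have hh3 : h0 ≤ 3*m0 := by omega
  have hadj := harary_adj_iff k n m0 h0 hk2 hn2 hmh
  have hcn : ∀ x y : Fin n, x ≠ y → ¬ G.Adj x y → ∃ z, G.Adj x z ∧ G.Adj z y := by
    intro x y hne hna
    rcases Nat.lt_trichotomy x.val y.val with hlt | heq | hgt
    · exact common_nbr_aux n m0 h0 G hadj hm1 hmh hh3 hn2 x y hlt hna
    · exact absurd (Fin.ext heq) hne
    · obtain ⟨z, hz1, hz2⟩ := common_nbr_aux n m0 h0 G hadj hm1 hmh hh3 hn2 y x hgt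
        (fun a => hna a.symm)
      exact ⟨z, hz2.symm, hz1.symm⟩
  have hd := dist_formula G hcn
  have hdeg := deg_count n m0 h0 G hadj hm1 hmh hh3 hn2
  have hstat : ∀ x : Fin n, status G x = if x.val = h0 then 2*n-k-3 else 2*n-k-2 := by
    intro x
    have hsf := status_formula G hd x
    rw [hdeg x, Fintype.card_fin] at hsf
    by_cases hx : x.val = h0
    · rw [if_pos hx] at hsf ⊢; omega
    · rw [if_neg hx] at hsf ⊢; omega
  have hx0v : (n - 1) / 2 = h0 := by omega
  refine ⟨?_, ?_, ?_, ?_⟩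
  · -- diameter
    unfold graphDiam
    apply le_antisymm
    · apply Finset.sup_le
      intro p _
      rw [hd p.1 p.2]
      split_ifs <;> omega
    · have hpair : G.dist (⟨0, by omega⟩ : Fin n) (⟨h0+1, by omega⟩ : Fin n) = 2 := by
        rw [hd, if_neg, if_neg]
        · rw [hadj]
          simp only [Fin.val_mk]
          omega
        · intro hc
          have := congrArg Fin.val hc
          simp only [Fin.val_mk] at this
          omega
      exact le_trans hpair.ge
        (Finset.le_sup (f := fun p : Fin n × Fin n => G.dist p.1 p.2)
          (Finset.mem_univ ((⟨0, by omega⟩ : Fin n), (⟨h0+1, by omega⟩ : Fin n))))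
  · rw [hstat, if_pos]
    simp only [Fin.val_mk]
    exact hx0v
  · intro x hx
    rw [hstat, if_neg]
    rw [← hx0v]
    exact hx
  · -- wiener
    unfold wiener
    have hdiag : ∑ p ∈ (univ : Finset (Fin n)).diag, (G.dist p.1 p.2 : ℚ) = 0 := by
      refine Finset.sum_eq_zero (fun p hp => ?_)
      rw [Finset.mem_diag] at hp
      rw [← hp.2, SimpleGraph.dist_self]
      norm_num
    have hsplit : ∑ p ∈ (univ : Finset (Fin n)).offDiag, (G.dist p.1 p.2 : ℚ)
        = ∑ p ∈ (univ : Finset (Fin n)) ×ˢ univ, (G.dist p.1 p.2 : ℚ) := by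
      rw [← Finset.diag_union_offDiag (univ : Finset (Fin n)),
        Finset.sum_union (Finset.disjoint_diag_offDiag _), hdiag, zero_add]
    rw [hsplit, Finset.sum_product]
    have hrow : ∀ x : Fin n, ∑ y, (G.dist x y : ℚ) = (status G x : ℚ) := by
      intro x
      unfold status
      push_cast
      rfl
    rw [Finset.sum_congr rfl (fun x _ => hrow x)]
    set x0 : Fin n := ⟨h0, by omega⟩ with hx0
    rw [← Finset.add_sum_erase _ _ (Finset.mem_univ x0)]
    have hother : ∀ x ∈ univ.erase x0, ((status G x : ℚ)) = ((2*n-k-2 : ℕ) : ℚ) := by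
      intro x hxm
      have hxe : x ≠ x0 := (Finset.mem_erase.mp hxm).1
      rw [hstat, if_neg (fun hc => hxe (Fin.ext hc))]
    rw [Finset.sum_congr rfl hother, Finset.sum_const,
      Finset.card_erase_of_mem (Finset.mem_univ x0), Finset.card_univ, Fintype.card_fin]
    rw [hstat, if_pos rfl]
    have hc1 : ((2*n-k-3 : ℕ) : ℚ) = 2*(n:ℚ) - k - 3 := by
      have h' : (2*n-k-3) + (k+3) = 2*n := by omega
      have := congrArg (fun t : ℕ => (t : ℚ)) h'
      push_cast at this
      linarith
    have hc2 : ((2*n-k-2 : ℕ) : ℚ) = 2*(n:ℚ) - k - 2 := by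
      have h' : (2*n-k-2) + (k+2) = 2*n := by omega
      have := congrArg (fun t : ℕ => (t : ℚ)) h'
      push_cast at this
      linarith
    rw [hc1, hc2, nsmul_eq_mul]
    have hn1 : ((n - 1 : ℕ) : ℚ) = (n : ℚ) - 1 := by
      have h' : (n - 1) + 1 = n := by omega
      have := congrArg (fun t : ℕ => (t : ℚ)) h'
      push_cast at this
      linarith
    rw [hn1]
    ring
end
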